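/- arXiv:1311.4592 — 3 statements merged into one kernel-verified Lean document; each statement's English description precedes it below -/
import Mathlib

section
/- Let k be a field and q ∈ k* with q ∉ {1, -1}. Let Λ = k_q[x,y] be the quantum plane, i.e. the k-algebra generated by x, y with relation x·y = q·y·x. Then every k-algebra automorphism φ of Λ satisfies φ(x) = a·x and φ(y) = b·y for some a, b ∈ k*; hence Aut_k(Λ) ≅ (k*)². -/
/-- Defining relation of the quantum plane `k_q[x,y]`: `x·y = q·(y·x)`. -/
inductive QPlaneRel (k : Type*) [Field k] (q : k) :
    FreeAlgebra k (Fin 2) → FreeAlgebra k (Fin 2) → Prop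
  | rel : QPlaneRel k q (FreeAlgebra.ι k 0 * FreeAlgebra.ι k 1)
      (q • (FreeAlgebra.ι k 1 * FreeAlgebra.ι k 0))

/-- The quantum plane `k_q[x,y]`. -/
abbrev QPlane (k : Type*) [Field k] (q : k) := RingQuot (QPlaneRel k q)

noncomputable def qpX (k : Type*) [Field k] (q : k) : QPlane k q :=
  RingQuot.mkAlgHom k (QPlaneRel k q) (FreeAlgebra.ι k 0)

noncomputable def qpY (k : Type*) [Field k] (q : k) : QPlane k q :=
  RingQuot.mkAlgHom k (QPlaneRel k q) (FreeAlgebra.ι k 1)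

namespace QAux

variable {k : Type*} [Field k] {q : k}

/-- generic commutation lemma -/
theorem pow_comm_q {A : Type*} [Ring A] [Algebra k A] {a b : A} {q : k}
    (h : a * b = q • (b * a)) (n : ℕ) : a ^ n * b = q ^ n • (b * a ^ n) := by
  induction n with
  | zero => simp
  | succ n ih =>
    rw [pow_succ, mul_assoc, h, mul_smul_comm, ← mul_assoc, ih, smul_mul_assoc,
      mul_assoc, ← pow_succ, ← smul_assoc, smul_eq_mul, ← pow_succ']

theorem pow_pow_comm_q {A : Type*} [Ring A] [Algebra k A] {a b : A} {q : k}
    (h : a * b = q • (b * a)) (n m : ℕ) : a ^ n * b ^ m = q ^ (n * m) • (b ^ m * a ^ n) := by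
  induction m with
  | zero => simp [mul_comm]
  | succ m ih =>
    rw [pow_succ, ← mul_assoc, ih, smul_mul_assoc, mul_assoc, pow_comm_q h,
      mul_smul_comm, ← mul_assoc, ← pow_succ, ← smul_assoc, smul_eq_mul, ← pow_add,
      Nat.mul_succ]

theorem qp_comm : qpX k q * qpY k q = q • (qpY k q * qpX k q) := by
  have := RingQuot.mkAlgHom_rel k (QPlaneRel.rel (k := k) (q := q))
  simpa [qpX, qpY, map_mul] using this

/-- the PBW monomials -/
noncomputable def M (k : Type*) [Field k] (q : k) (p : ℕ × ℕ) : QPlane k q :=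
  qpY k q ^ p.1 * qpX k q ^ p.2

theorem M_mul (p r : ℕ × ℕ) :
    M k q p * M k q r = q ^ (p.2 * r.1) • M k q (p + r) := by
  unfold M
  rw [mul_assoc, ← mul_assoc (qpX k q ^ p.2), pow_pow_comm_q qp_comm,
    smul_mul_assoc, mul_smul_comm, ← mul_assoc, mul_assoc, Prod.fst_add, Prod.snd_add, pow_add, pow_add, mul_assoc, mul_assoc]

theorem M_zero : M k q 0 = 1 := by simp [M]

end QAux
section
variable {k : Type*} [Field k] {q : k}
open MvPolynomial

noncomputable def subQ (k : Type*) [Field k] (q : k) :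
    MvPolynomial (Fin 2) k →ₐ[k] MvPolynomial (Fin 2) k :=
  aeval ![X 0, q • X 1]

@[simp] theorem subQ_X0 : subQ k q (X 0) = X 0 := by simp [subQ]
@[simp] theorem subQ_X1 : subQ k q (X 1) = q • X 1 := by simp [subQ]

noncomputable def Xop (k : Type*) [Field k] (q : k) :
    Module.End k (MvPolynomial (Fin 2) k) :=
  (LinearMap.mulLeft k (X 0)).comp (subQ k q).toLinearMap

noncomputable def Yop (k : Type*) [Field k] :
    Module.End k (MvPolynomial (Fin 2) k) :=
  LinearMap.mulLeft k (X 1)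

theorem XYop_rel : Xop k q * Yop k = q • (Yop k * Xop k q) := by
  apply LinearMap.ext
  intro p
  simp [Xop, Yop, Module.End.mul_apply, map_mul, smul_mul_assoc, mul_smul_comm]
  ring_nf

theorem Xop_pow_one (j : ℕ) : (Xop k q ^ j) 1 = (X 0 : MvPolynomial (Fin 2) k) ^ j := by
  induction j with
  | zero => simp
  | succ j ih =>
    rw [pow_succ', Module.End.mul_apply, ih]
    simp [Xop, map_pow]
    rw [pow_succ]; ring

theorem Yop_pow (i : ℕ) (p : MvPolynomial (Fin 2) k) :
    (Yop k ^ i) p = X 1 ^ i * p := by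
  induction i with
  | zero => simp
  | succ i ih => rw [pow_succ', Module.End.mul_apply, ih]; simp [Yop, pow_succ]; ring
end

namespace QAux
variable {k : Type*} [Field k] {q : k}
open MvPolynomial

noncomputable def rep (k : Type*) [Field k] (q : k) :
    QPlane k q →ₐ[k] Module.End k (MvPolynomial (Fin 2) k) :=
  RingQuot.liftAlgHom k
    ⟨FreeAlgebra.lift k ![Xop k q, Yop k], by
      rintro x y ⟨⟩
      simp [map_mul, XYop_rel]⟩

@[simp] theorem rep_x : rep k q (qpX k q) = Xop k q := by
  simp [rep, qpX, RingQuot.liftAlgHom_mkAlgHom_apply]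

@[simp] theorem rep_y : rep k q (qpY k q) = Yop k := by
  simp [rep, qpY, RingQuot.liftAlgHom_mkAlgHom_apply]

theorem rep_M (p : ℕ × ℕ) :
    rep k q (M k q p) 1 = X 1 ^ p.1 * X 0 ^ p.2 := by
  simp only [M, map_mul, map_pow, rep_x, rep_y, Module.End.mul_apply, Xop_pow_one, Yop_pow]

theorem M_linearIndependent : LinearIndependent k (M k q) := by
  have h2 : LinearIndependent k
      (fun p : ℕ × ℕ => (X 1 ^ p.1 * X 0 ^ p.2 : MvPolynomial (Fin 2) k)) := by
    have he : Function.Injective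
        (fun p : ℕ × ℕ => (Finsupp.single (1 : Fin 2) p.1 + Finsupp.single (0 : Fin 2) p.2)) := by
      intro p r h
      have h1 := congrArg (fun f => f 1) h
      have h0 := congrArg (fun f => f 0) h
      simp [Finsupp.single_apply] at h1 h0
      exact Prod.ext h1 h0
    have := (MvPolynomial.basisMonomials (Fin 2) k).linearIndependent.comp _ he
    convert this using 1
    funext p
    simp [MvPolynomial.coe_basisMonomials, X_pow_eq_monomial, monomial_mul]
    all_goals rfl
  have hcomp : (fun p : ℕ × ℕ => (X 1 ^ p.1 * X 0 ^ p.2 : MvPolynomial (Fin 2) k)) =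
      ((LinearMap.applyₗ (1 : MvPolynomial (Fin 2) k)).comp (rep k q).toLinearMap) ∘ M k q := by
    funext p; simp [rep_M]
  exact LinearIndependent.of_comp _ (hcomp ▸ h2)

theorem adjoin_xy : Algebra.adjoin k {qpX k q, qpY k q} = ⊤ := by
  have h1 : Subalgebra.map (RingQuot.mkAlgHom k (QPlaneRel k q))
      (Algebra.adjoin k (Set.range (FreeAlgebra.ι k : Fin 2 → FreeAlgebra k (Fin 2)))) = ⊤ := by
    rw [FreeAlgebra.adjoin_range_ι, Algebra.map_top]
    exact AlgHom.range_eq_top _ |>.mpr (RingQuot.mkAlgHom_surjective k _)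
  rw [AlgHom.map_adjoin] at h1
  have h2 : (RingQuot.mkAlgHom k (QPlaneRel k q)) '' (Set.range (FreeAlgebra.ι k)) =
      {qpX k q, qpY k q} := by
    ext w
    simp only [Set.mem_image, Set.mem_range, exists_exists_eq_and, Set.mem_insert_iff,
      Set.mem_singleton_iff]
    constructor
    · rintro ⟨i, rfl⟩
      fin_cases i
      · left; rfl
      · right; rfl
    · rintro (rfl | rfl)
      exacts [⟨0, rfl⟩, ⟨1, rfl⟩]
  rw [h2] at h1
  exact h1

theorem mul_mem_spanM {w₁ w₂ : QPlane k q}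
    (h₁ : w₁ ∈ Submodule.span k (Set.range (M k q)))
    (h₂ : w₂ ∈ Submodule.span k (Set.range (M k q))) :
    w₁ * w₂ ∈ Submodule.span k (Set.range (M k q)) := by
  induction h₁ using Submodule.span_induction with
  | mem a ha =>
    induction h₂ using Submodule.span_induction with
    | mem b hb =>
      obtain ⟨p, rfl⟩ := ha; obtain ⟨r, rfl⟩ := hb
      rw [M_mul]
      exact Submodule.smul_mem _ _ (Submodule.subset_span ⟨p + r, rfl⟩)
    | zero => simp
    | add x y _ _ hx hy => rw [mul_add]; exact Submodule.add_mem _ hx hy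
    | smul c x _ hx => rw [mul_smul_comm]; exact Submodule.smul_mem _ _ hx
  | zero => simp
  | add x y _ _ hx hy => rw [add_mul]; exact Submodule.add_mem _ hx hy
  | smul c x _ hx => rw [smul_mul_assoc]; exact Submodule.smul_mem _ _ hx

theorem spanM_top : Submodule.span k (Set.range (M k q)) = ⊤ := by
  rw [eq_top_iff]
  rintro w -
  have hw : w ∈ Algebra.adjoin k {qpX k q, qpY k q} := by rw [adjoin_xy]; trivial
  induction hw using Algebra.adjoin_induction with
  | mem a ha =>
    rcases ha with rfl | rfl
    · exact Submodule.subset_span ⟨(0,1), by simp [M]⟩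
    · exact Submodule.subset_span ⟨(1,0), by simp [M]⟩
  | algebraMap c =>
    rw [Algebra.algebraMap_eq_smul_one]
    exact Submodule.smul_mem _ _ (Submodule.subset_span ⟨0, M_zero⟩)
  | add x y _ _ hx hy => exact Submodule.add_mem _ hx hy
  | mul x y _ _ hx hy => exact mul_mem_spanM hx hy

noncomputable def B (k : Type*) [Field k] (q : k) : Module.Basis (ℕ × ℕ) k (QPlane k q) :=
  Module.Basis.mk M_linearIndependent (by rw [spanM_top])

@[simp] theorem B_apply (p : ℕ × ℕ) : B k q p = M k q p := Module.Basis.mk_apply _ _ _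

end QAux

namespace QAux
variable {k : Type*} [Field k] {q : k}


/-- coefficient of a product -/
theorem repr_mul (w₁ w₂ : QPlane k q) (e : ℕ × ℕ) :
    ((B k q).repr (w₁ * w₂)) e =
      ∑ d ∈ ((B k q).repr w₁).support ×ˢ ((B k q).repr w₂).support,
        if d.1 + d.2 = e then
          q ^ (d.1.2 * d.2.1) * ((B k q).repr w₁) d.1 * ((B k q).repr w₂) d.2
        else 0 := by
  have h1 : w₁ = ∑ d ∈ ((B k q).repr w₁).support, ((B k q).repr w₁) d • M k q d := by
    conv_lhs => rw [← Module.Basis.linearCombination_repr (B k q) w₁]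
    rw [Finsupp.linearCombination_apply, Finsupp.sum]
    simp
  have h2 : w₂ = ∑ d ∈ ((B k q).repr w₂).support, ((B k q).repr w₂) d • M k q d := by
    conv_lhs => rw [← Module.Basis.linearCombination_repr (B k q) w₂]
    rw [Finsupp.linearCombination_apply, Finsupp.sum]
    simp
  conv_lhs => rw [h1, h2]
  rw [Finset.sum_mul_sum, ← Finset.sum_product']
  rw [map_sum, Finsupp.finset_sum_apply]
  apply Finset.sum_congr rfl
  rintro ⟨d₁, d₂⟩ -
  have : (((B k q).repr w₁) d₁ • M k q d₁) * (((B k q).repr w₂) d₂ • M k q d₂) =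
      (q ^ (d₁.2 * d₂.1) * ((B k q).repr w₁) d₁ * ((B k q).repr w₂) d₂) • M k q (d₁ + d₂) := by
    rw [smul_mul_smul_comm, M_mul, ← smul_assoc]
    congr 1
    simp [smul_eq_mul]
    ring
  rw [this, ← B_apply, map_smul, Module.Basis.repr_self, Finsupp.smul_apply, Finsupp.single_apply,
    smul_eq_mul, mul_ite, mul_one, mul_zero]

/-- `d` is the (lex) top degree of `w`. -/
def IsTop (w : QPlane k q) (d : ℕ × ℕ) : Prop :=
  ((B k q).repr w) d ≠ 0 ∧ ∀ e, ((B k q).repr w) e ≠ 0 → toLex e ≤ toLex d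

/-- `d` is the (lex) bottom degree of `w`. -/
def IsBot (w : QPlane k q) (d : ℕ × ℕ) : Prop :=
  ((B k q).repr w) d ≠ 0 ∧ ∀ e, ((B k q).repr w) e ≠ 0 → toLex d ≤ toLex e

theorem exists_isTop {w : QPlane k q} (hw : w ≠ 0) : ∃ d, IsTop w d := by
  have hs : ((B k q).repr w).support.Nonempty := by
    rw [Finsupp.support_nonempty_iff]
    simpa using hw
  obtain ⟨d, hd, hmax⟩ := Finset.exists_max_image _ (fun e => toLex e) hs
  exact ⟨d, Finsupp.mem_support_iff.mp hd,
    fun e he => hmax e (Finsupp.mem_support_iff.mpr he)⟩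

theorem exists_isBot {w : QPlane k q} (hw : w ≠ 0) : ∃ d, IsBot w d := by
  have hs : ((B k q).repr w).support.Nonempty := by
    rw [Finsupp.support_nonempty_iff]
    simpa using hw
  obtain ⟨d, hd, hmin⟩ := Finset.exists_min_image _ (fun e => toLex e) hs
  exact ⟨d, Finsupp.mem_support_iff.mp hd,
    fun e he => hmin e (Finsupp.mem_support_iff.mpr he)⟩

theorem IsTop.coeff_mul {w₁ w₂ : QPlane k q} {d₁ d₂ : ℕ × ℕ}
    (h₁ : IsTop w₁ d₁) (h₂ : IsTop w₂ d₂) :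
    ((B k q).repr (w₁ * w₂)) (d₁ + d₂) =
      q ^ (d₁.2 * d₂.1) * ((B k q).repr w₁) d₁ * ((B k q).repr w₂) d₂ := by
  rw [repr_mul]
  rw [Finset.sum_eq_single (d₁, d₂)]
  · simp
  · rintro ⟨e₁, e₂⟩ hmem hne
    rw [Finset.mem_product] at hmem
    rw [if_neg]
    intro heq
    have he₁ := h₁.2 e₁ (Finsupp.mem_support_iff.mp hmem.1)
    have he₂ := h₂.2 e₂ (Finsupp.mem_support_iff.mp hmem.2)
    have hlt : toLex (e₁ + e₂) < toLex (d₁ + d₂) := by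
      rcases eq_or_lt_of_le he₁ with h | h
      · have hne2 : e₂ ≠ d₂ := by
          rintro rfl
          exact hne (by rw [Prod.mk.injEq]; exact ⟨toLex.injective h, rfl⟩)
      -- e₁ = d₁ (as toLex inj), e₂ < d₂
        have he1 : e₁ = d₁ := toLex.injective h
        subst he1
        rw [toLex_add, toLex_add]
        exact add_lt_add_right (lt_of_le_of_ne he₂ (fun hh => hne2 (toLex.injective hh))) _
      · rw [toLex_add, toLex_add]
        exact add_lt_add_of_lt_of_le h he₂
    rw [heq] at hlt
    exact absurd rfl hlt.ne
  · intro hmem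
    exact absurd (Finset.mem_product.mpr
      ⟨Finsupp.mem_support_iff.mpr h₁.1, Finsupp.mem_support_iff.mpr h₂.1⟩) hmem

theorem IsBot.coeff_mul {w₁ w₂ : QPlane k q} {d₁ d₂ : ℕ × ℕ}
    (h₁ : IsBot w₁ d₁) (h₂ : IsBot w₂ d₂) :
    ((B k q).repr (w₁ * w₂)) (d₁ + d₂) =
      q ^ (d₁.2 * d₂.1) * ((B k q).repr w₁) d₁ * ((B k q).repr w₂) d₂ := by
  rw [repr_mul]
  rw [Finset.sum_eq_single (d₁, d₂)]
  · simp
  · rintro ⟨e₁, e₂⟩ hmem hne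
    rw [Finset.mem_product] at hmem
    rw [if_neg]
    intro heq
    have he₁ := h₁.2 e₁ (Finsupp.mem_support_iff.mp hmem.1)
    have he₂ := h₂.2 e₂ (Finsupp.mem_support_iff.mp hmem.2)
    have hlt : toLex (d₁ + d₂) < toLex (e₁ + e₂) := by
      rcases eq_or_lt_of_le he₁ with h | h
      · have hne2 : e₂ ≠ d₂ := by
          rintro rfl
          exact hne (by rw [Prod.mk.injEq]; exact ⟨(toLex.injective h).symm, rfl⟩)
        have he1 : d₁ = e₁ := toLex.injective h
        subst he1
        rw [toLex_add, toLex_add]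
        exact add_lt_add_right (lt_of_le_of_ne he₂ (fun hh => hne2 (toLex.injective hh.symm))) _
      · rw [toLex_add, toLex_add]
        exact add_lt_add_of_lt_of_le h he₂
    rw [heq] at hlt
    exact absurd rfl hlt.ne
  · intro hmem
    exact absurd (Finset.mem_product.mpr
      ⟨Finsupp.mem_support_iff.mpr h₁.1, Finsupp.mem_support_iff.mpr h₂.1⟩) hmem

theorem IsTop.mul (hq0 : q ≠ 0) {w₁ w₂ : QPlane k q} {d₁ d₂ : ℕ × ℕ}
    (h₁ : IsTop w₁ d₁) (h₂ : IsTop w₂ d₂) : IsTop (w₁ * w₂) (d₁ + d₂) := by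
  constructor
  · rw [h₁.coeff_mul h₂]
    exact mul_ne_zero (mul_ne_zero (pow_ne_zero _ hq0) h₁.1) h₂.1
  · intro e he
    rw [repr_mul] at he
    obtain ⟨⟨e₁, e₂⟩, hmem, hne⟩ := Finset.exists_ne_zero_of_sum_ne_zero he
    rw [Finset.mem_product] at hmem
    by_cases heq : e₁ + e₂ = e
    · subst heq
      rw [toLex_add]
      exact le_trans (add_le_add (h₁.2 e₁ (Finsupp.mem_support_iff.mp hmem.1))
        (h₂.2 e₂ (Finsupp.mem_support_iff.mp hmem.2))) (le_of_eq (toLex_add _ _).symm)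
    · rw [if_neg heq] at hne
      exact absurd rfl hne

theorem IsBot.mul (hq0 : q ≠ 0) {w₁ w₂ : QPlane k q} {d₁ d₂ : ℕ × ℕ}
    (h₁ : IsBot w₁ d₁) (h₂ : IsBot w₂ d₂) : IsBot (w₁ * w₂) (d₁ + d₂) := by
  constructor
  · rw [h₁.coeff_mul h₂]
    exact mul_ne_zero (mul_ne_zero (pow_ne_zero _ hq0) h₁.1) h₂.1
  · intro e he
    rw [repr_mul] at he
    obtain ⟨⟨e₁, e₂⟩, hmem, hne⟩ := Finset.exists_ne_zero_of_sum_ne_zero he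
    rw [Finset.mem_product] at hmem
    by_cases heq : e₁ + e₂ = e
    · subst heq
      rw [toLex_add]
      exact le_trans (le_of_eq (toLex_add _ _)) (add_le_add
        (h₁.2 e₁ (Finsupp.mem_support_iff.mp hmem.1))
        (h₂.2 e₂ (Finsupp.mem_support_iff.mp hmem.2)))
    · rw [if_neg heq] at hne
      exact absurd rfl hne

theorem isTop_one : IsTop (1 : QPlane k q) 0 := by
  have h : (1 : QPlane k q) = B k q 0 := by rw [B_apply, M_zero]
  constructor
  · rw [h, Module.Basis.repr_self]
    simp
  · intro e he
    rw [h, Module.Basis.repr_self, Finsupp.single_apply] at he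
    by_cases h0 : (0 : ℕ × ℕ) = e
    · subst h0; rfl
    · rw [if_neg h0] at he; exact absurd rfl he

theorem isBot_one : IsBot (1 : QPlane k q) 0 := by
  have h : (1 : QPlane k q) = B k q 0 := by rw [B_apply, M_zero]
  constructor
  · rw [h, Module.Basis.repr_self]
    simp
  · intro e he
    rw [h, Module.Basis.repr_self, Finsupp.single_apply] at he
    by_cases h0 : (0 : ℕ × ℕ) = e
    · subst h0; rfl
    · rw [if_neg h0] at he; exact absurd rfl he

theorem IsTop.pow (hq0 : q ≠ 0) {w : QPlane k q} {d : ℕ × ℕ} (h : IsTop w d) (n : ℕ) :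
    IsTop (w ^ n) (n • d) := by
  induction n with
  | zero => simpa using isTop_one
  | succ n ih =>
    rw [pow_succ, succ_nsmul]
    exact ih.mul hq0 h

theorem IsBot.pow (hq0 : q ≠ 0) {w : QPlane k q} {d : ℕ × ℕ} (h : IsBot w d) (n : ℕ) :
    IsBot (w ^ n) (n • d) := by
  induction n with
  | zero => simpa using isBot_one
  | succ n ih =>
    rw [pow_succ, succ_nsmul]
    exact ih.mul hq0 h

end QAux

namespace QAux
variable {k : Type*} [Field k] {q : k}

theorem rel_top {u v : QPlane k q} {du dv : ℕ × ℕ}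
    (hc : u * v = q • (v * u)) (hu : IsTop u du) (hv : IsTop v dv) :
    q ^ (du.2 * dv.1) = q * q ^ (dv.2 * du.1) := by
  have e1 := hu.coeff_mul hv
  have e2 : ((B k q).repr (u * v)) (du + dv) =
      q * (q ^ (dv.2 * du.1) * ((B k q).repr v) dv * ((B k q).repr u) du) := by
    rw [hc, map_smul, Finsupp.smul_apply, smul_eq_mul, add_comm du dv, hv.coeff_mul hu]
  have e3 : q ^ (du.2 * dv.1) * ((B k q).repr u) du * ((B k q).repr v) dv =
      (q * q ^ (dv.2 * du.1)) * ((B k q).repr u) du * ((B k q).repr v) dv := by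
    rw [← e1, e2]; ring
  exact mul_right_cancel₀ hv.1 e3 |> mul_right_cancel₀ hu.1

theorem rel_bot {u v : QPlane k q} {du dv : ℕ × ℕ}
    (hc : u * v = q • (v * u)) (hu : IsBot u du) (hv : IsBot v dv) :
    q ^ (du.2 * dv.1) = q * q ^ (dv.2 * du.1) := by
  have e1 := hu.coeff_mul hv
  have e2 : ((B k q).repr (u * v)) (du + dv) =
      q * (q ^ (dv.2 * du.1) * ((B k q).repr v) dv * ((B k q).repr u) du) := by
    rw [hc, map_smul, Finsupp.smul_apply, smul_eq_mul, add_comm du dv, hv.coeff_mul hu]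
  have e3 : q ^ (du.2 * dv.1) * ((B k q).repr u) du * ((B k q).repr v) dv =
      (q * q ^ (dv.2 * du.1)) * ((B k q).repr u) du * ((B k q).repr v) dv := by
    rw [← e1, e2]; ring
  exact mul_right_cancel₀ hv.1 e3 |> mul_right_cancel₀ hu.1

theorem ne_zero_of_rel (hq1 : q ≠ 1) {du dv : ℕ × ℕ}
    (hrel : q ^ (du.2 * dv.1) = q * q ^ (dv.2 * du.1)) : du ≠ 0 ∧ dv ≠ 0 := by
  constructor
  · rintro rfl
    simp only [Prod.snd_zero, Prod.fst_zero, Nat.zero_mul, Nat.mul_zero, pow_zero,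
      mul_one] at hrel
    exact hq1 hrel.symm
  · rintro rfl
    simp only [Prod.snd_zero, Prod.fst_zero, Nat.zero_mul, Nat.mul_zero, pow_zero,
      mul_one] at hrel
    exact hq1 hrel.symm

theorem sum_coeff (cf : (ℕ × ℕ) →₀ k) (Wf : ℕ × ℕ → QPlane k q) (e : ℕ × ℕ) :
    ((B k q).repr (cf.sum fun p a => a • Wf p)) e =
      ∑ p ∈ cf.support, cf p * ((B k q).repr (Wf p)) e := by
  rw [Finsupp.sum, map_sum, Finsupp.finset_sum_apply]
  apply Finset.sum_congr rfl
  intro p _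
  rw [map_smul, Finsupp.smul_apply, smul_eq_mul]

/-- key cancellation lemma: two equal mixed degrees force proportionality. -/
theorem key_cancel {dv du p p' : ℕ × ℕ}
    (h : p.1 • dv + p.2 • du = p'.1 • dv + p'.2 • du)
    (hne : p ≠ p') (hdu : du ≠ 0) (hdv : dv ≠ 0) :
    du.2 * dv.1 = dv.2 * du.1 := by
  obtain ⟨m, n⟩ := p
  obtain ⟨m', n'⟩ := p'
  obtain ⟨c, d⟩ := dv
  obtain ⟨a, b⟩ := du
  simp only [Prod.ext_iff, Prod.smul_fst, Prod.smul_snd, Prod.fst_add, Prod.snd_add,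
    smul_eq_mul] at h
  obtain ⟨h1, h2⟩ := h
  have hdu' : ¬(a = 0 ∧ b = 0) := fun hh => hdu (by simp [Prod.ext_iff, hh.1, hh.2])
  have h1c : ((m : ℤ) - m') * c = ((n' : ℤ) - n) * a := by
    have : (m : ℤ) * c + n * a = m' * c + n' * a := by exact_mod_cast h1
    linear_combination this
  have h2c : ((m : ℤ) - m') * d = ((n' : ℤ) - n) * b := by
    have : (m : ℤ) * d + n * b = m' * d + n' * b := by exact_mod_cast h2
    linear_combination this
  by_cases hs : (m : ℤ) - m' = 0
  · have hm : m = m' := by exact_mod_cast sub_eq_zero.mp hs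
    subst hm
    by_cases ht : (n' : ℤ) - n = 0
    · have hn : n = n' := by omega
      exact absurd (by simp [hn] : (m, n) = (m, n')) hne
    · rw [hs, zero_mul] at h1c h2c
      have ha : (a : ℤ) = 0 := by
        rcases mul_eq_zero.mp h1c.symm with h | h
        · exact absurd h ht
        · exact h
      have hb : (b : ℤ) = 0 := by
        rcases mul_eq_zero.mp h2c.symm with h | h
        · exact absurd h ht
        · exact h
      exact absurd ⟨by exact_mod_cast ha, by exact_mod_cast hb⟩ hdu'
  · have key : ((m : ℤ) - m') * (b * c) = ((m : ℤ) - m') * (d * a) := by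
      linear_combination (b : ℤ) * h1c - (a : ℤ) * h2c
    have := mul_left_cancel₀ hs key
    exact_mod_cast this

/-- a mixed degree summing to a "unit vector" forces one of the pieces. -/
theorem smul_sum_eq_unit {p A B z : ℕ × ℕ} (hA : A ≠ 0) (hB : B ≠ 0)
    (hz : z.1 + z.2 = 1) (h : p.1 • A + p.2 • B = z) :
    (p = (1, 0) ∧ A = z) ∨ (p = (0, 1) ∧ B = z) := by
  have htot : p.1 * (A.1 + A.2) + p.2 * (B.1 + B.2) = 1 := by
    have h1 : p.1 * A.1 + p.2 * B.1 = z.1 := by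
      have := congrArg Prod.fst h; simpa [smul_eq_mul] using this
    have h2 : p.1 * A.2 + p.2 * B.2 = z.2 := by
      have := congrArg Prod.snd h; simpa [smul_eq_mul] using this
    calc p.1 * (A.1 + A.2) + p.2 * (B.1 + B.2)
        = (p.1 * A.1 + p.2 * B.1) + (p.1 * A.2 + p.2 * B.2) := by ring
      _ = 1 := by rw [h1, h2, hz]
  have hA1 : 1 ≤ A.1 + A.2 := by
    rcases Nat.eq_zero_or_pos (A.1 + A.2) with h0 | h0
    · exact absurd (Prod.ext (Nat.eq_zero_of_add_eq_zero_right h0)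
        (Nat.eq_zero_of_add_eq_zero_left h0)) hA
    · exact h0
  have hB1 : 1 ≤ B.1 + B.2 := by
    rcases Nat.eq_zero_or_pos (B.1 + B.2) with h0 | h0
    · exact absurd (Prod.ext (Nat.eq_zero_of_add_eq_zero_right h0)
        (Nat.eq_zero_of_add_eq_zero_left h0)) hB
    · exact h0
  rcases Nat.eq_zero_or_pos p.1 with hp1 | hp1
  · -- p.1 = 0, so p.2 * tB = 1
    rw [hp1, zero_mul, zero_add] at htot
    have hp2 : p.2 = 1 := Nat.eq_one_of_mul_eq_one_right htot
    right
    have hp : p = (0, 1) := Prod.ext hp1 hp2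
    refine ⟨hp, ?_⟩
    rw [hp] at h
    simpa using h
  · -- p.1 ≥ 1 forces p.1 * tA ≥ 1, so p.2 * tB = 0 and p.1 * tA = 1
    have hge : 1 ≤ p.1 * (A.1 + A.2) := Nat.one_le_iff_ne_zero.mpr
      (Nat.mul_ne_zero (Nat.pos_iff_ne_zero.mp hp1) (by omega))
    have hA1' : p.1 * (A.1 + A.2) = 1 := by omega
    have hB0 : p.2 * (B.1 + B.2) = 0 := by omega
    have hp1' : p.1 = 1 := Nat.eq_one_of_mul_eq_one_right (by rw [mul_comm] at hA1' ⊢; exact hA1')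
    have hp2 : p.2 = 0 := by
      rcases Nat.mul_eq_zero.mp hB0 with h' | h'
      · exact h'
      · omega
    left
    have hp : p = (1, 0) := Prod.ext hp1' hp2
    refine ⟨hp, ?_⟩
    rw [hp] at h
    simpa using h

end QAux

namespace QAux
variable {k : Type*} [Field k] {q : k}

theorem M_X : M k q (0, 1) = qpX k q := by simp [M]
theorem M_Y : M k q (1, 0) = qpY k q := by simp [M]

theorem repr_x : (B k q).repr (qpX k q) = Finsupp.single ((0 : ℕ), (1 : ℕ)) 1 := by
  rw [← M_X, ← B_apply, Module.Basis.repr_self]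

theorem repr_y : (B k q).repr (qpY k q) = Finsupp.single ((1 : ℕ), (0 : ℕ)) 1 := by
  rw [← M_Y, ← B_apply, Module.Basis.repr_self]

theorem run_top (hq0 : q ≠ 0) (hq1 : q ≠ 1) {u v : QPlane k q} {du dv : ℕ × ℕ}
    (hu : IsTop u du) (hv : IsTop v dv)
    (hrel : q ^ (du.2 * dv.1) = q * q ^ (dv.2 * du.1))
    (hdu : du ≠ 0) (hdv : dv ≠ 0)
    {w : QPlane k q} {z : ℕ × ℕ} (hz : z.1 + z.2 = 1)
    (hw : (B k q).repr w = Finsupp.single z 1)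
    {cf : (ℕ × ℕ) →₀ k} (hsum : w = cf.sum fun p a => a • (v ^ p.1 * u ^ p.2)) :
    dv = z ∨ du = z := by
  have hWtop : ∀ p : ℕ × ℕ, IsTop (v ^ p.1 * u ^ p.2) (p.1 • dv + p.2 • du) :=
    fun p => (hv.pow hq0 p.1).mul hq0 (hu.pow hq0 p.2)
  have hne : cf.support.Nonempty := by
    rw [Finsupp.support_nonempty_iff]
    rintro rfl
    rw [Finsupp.sum_zero_index] at hsum
    have h1 : ((B k q).repr w) z = 1 := by rw [hw]; simp
    rw [hsum] at h1
    simp at h1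
  obtain ⟨ν, hν, hmax⟩ := Finset.exists_max_image cf.support
    (fun p => toLex (p.1 • dv + p.2 • du)) hne
  by_cases huniq : ∀ p ∈ cf.support, p.1 • dv + p.2 • du = ν.1 • dv + ν.2 • du → p = ν
  · have hco : ((B k q).repr w) (ν.1 • dv + ν.2 • du)
        = cf ν * ((B k q).repr (v ^ ν.1 * u ^ ν.2)) (ν.1 • dv + ν.2 • du) := by
      rw [hsum, sum_coeff, Finset.sum_eq_single ν]
      · intro p hp hpν
        have hlt : toLex (p.1 • dv + p.2 • du) < toLex (ν.1 • dv + ν.2 • du) :=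
          lt_of_le_of_ne (hmax p hp) (fun hh => hpν (huniq p hp (toLex.injective hh)))
        have h0 : ((B k q).repr (v ^ p.1 * u ^ p.2)) (ν.1 • dv + ν.2 • du) = 0 := by
          by_contra hnz
          exact absurd ((hWtop p).2 _ hnz) (not_le.mpr hlt)
        rw [h0, mul_zero]
      · intro h; exact absurd hν h
    have hnz : ((B k q).repr w) (ν.1 • dv + ν.2 • du) ≠ 0 := by
      rw [hco]; exact mul_ne_zero (Finsupp.mem_support_iff.mp hν) (hWtop ν).1
    rw [hw] at hnz
    have hzz : ν.1 • dv + ν.2 • du = z := by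
      by_contra hne'
      rw [Finsupp.single_apply, if_neg (fun hh => hne' hh.symm)] at hnz
      exact hnz rfl
    rcases smul_sum_eq_unit hdv hdu hz hzz with ⟨_, h⟩ | ⟨_, h⟩
    · exact Or.inl h
    · exact Or.inr h
  · push_neg at huniq
    obtain ⟨p, hp, hTp, hpν⟩ := huniq
    have hkey := key_cancel hTp hpν hdu hdv
    rw [hkey] at hrel
    have h1 : (1 : k) * q ^ (dv.2 * du.1) = q * q ^ (dv.2 * du.1) := by
      rw [one_mul]; exact hrel
    exact absurd (mul_right_cancel₀ (pow_ne_zero _ hq0) h1).symm hq1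

theorem run_bot (hq0 : q ≠ 0) (hq1 : q ≠ 1) {u v : QPlane k q} {du dv : ℕ × ℕ}
    (hu : IsBot u du) (hv : IsBot v dv)
    (hrel : q ^ (du.2 * dv.1) = q * q ^ (dv.2 * du.1))
    (hdu : du ≠ 0) (hdv : dv ≠ 0)
    {w : QPlane k q} {z : ℕ × ℕ} (hz : z.1 + z.2 = 1)
    (hw : (B k q).repr w = Finsupp.single z 1)
    {cf : (ℕ × ℕ) →₀ k} (hsum : w = cf.sum fun p a => a • (v ^ p.1 * u ^ p.2)) :
    dv = z ∨ du = z := by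
  have hWbot : ∀ p : ℕ × ℕ, IsBot (v ^ p.1 * u ^ p.2) (p.1 • dv + p.2 • du) :=
    fun p => (hv.pow hq0 p.1).mul hq0 (hu.pow hq0 p.2)
  have hne : cf.support.Nonempty := by
    rw [Finsupp.support_nonempty_iff]
    rintro rfl
    rw [Finsupp.sum_zero_index] at hsum
    have h1 : ((B k q).repr w) z = 1 := by rw [hw]; simp
    rw [hsum] at h1
    simp at h1
  obtain ⟨ν, hν, hmin⟩ := Finset.exists_min_image cf.support
    (fun p => toLex (p.1 • dv + p.2 • du)) hne
  by_cases huniq : ∀ p ∈ cf.support, p.1 • dv + p.2 • du = ν.1 • dv + ν.2 • du → p = ν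
  · have hco : ((B k q).repr w) (ν.1 • dv + ν.2 • du)
        = cf ν * ((B k q).repr (v ^ ν.1 * u ^ ν.2)) (ν.1 • dv + ν.2 • du) := by
      rw [hsum, sum_coeff, Finset.sum_eq_single ν]
      · intro p hp hpν
        have hlt : toLex (ν.1 • dv + ν.2 • du) < toLex (p.1 • dv + p.2 • du) :=
          lt_of_le_of_ne (hmin p hp) (fun hh => hpν (huniq p hp (toLex.injective hh.symm)))
        have h0 : ((B k q).repr (v ^ p.1 * u ^ p.2)) (ν.1 • dv + ν.2 • du) = 0 := by
          by_contra hnz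
          exact absurd ((hWbot p).2 _ hnz) (not_le.mpr hlt)
        rw [h0, mul_zero]
      · intro h; exact absurd hν h
    have hnz : ((B k q).repr w) (ν.1 • dv + ν.2 • du) ≠ 0 := by
      rw [hco]; exact mul_ne_zero (Finsupp.mem_support_iff.mp hν) (hWbot ν).1
    rw [hw] at hnz
    have hzz : ν.1 • dv + ν.2 • du = z := by
      by_contra hne'
      rw [Finsupp.single_apply, if_neg (fun hh => hne' hh.symm)] at hnz
      exact hnz rfl
    rcases smul_sum_eq_unit hdv hdu hz hzz with ⟨_, h⟩ | ⟨_, h⟩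
    · exact Or.inl h
    · exact Or.inr h
  · push_neg at huniq
    obtain ⟨p, hp, hTp, hpν⟩ := huniq
    have hkey := key_cancel hTp hpν hdu hdv
    rw [hkey] at hrel
    have h1 : (1 : k) * q ^ (dv.2 * du.1) = q * q ^ (dv.2 * du.1) := by
      rw [one_mul]; exact hrel
    exact absurd (mul_right_cancel₀ (pow_ne_zero _ hq0) h1).symm hq1

end QAux

namespace QAux
variable {k : Type*} [Field k] {q : k}

theorem resolve (hq1 : q ≠ 1) (hqm1 : q ≠ -1) {du dv : ℕ × ℕ}
    (hrel : q ^ (du.2 * dv.1) = q * q ^ (dv.2 * du.1))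
    (hX : dv = (0, 1) ∨ du = (0, 1)) (hY : dv = (1, 0) ∨ du = (1, 0)) :
    du = (0, 1) ∧ dv = (1, 0) := by
  rcases hX with h1 | h1
  · rcases hY with h2 | h2
    · rw [h1] at h2; simp at h2
    · -- dv = (0,1), du = (1,0): impossible
      rw [h1, h2] at hrel
      norm_num at hrel
      rcases mul_self_eq_one_iff.mp hrel.symm with h | h
      · exact absurd h hq1
      · exact absurd h hqm1
  · rcases hY with h2 | h2
    · exact ⟨h1, h2⟩
    · rw [h1] at h2; simp at h2

theorem core (hq0 : q ≠ 0) (hq1 : q ≠ 1) (hqm1 : q ≠ -1) {u v : QPlane k q}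
    (hc : u * v = q • (v * u)) (hu0 : u ≠ 0) (hv0 : v ≠ 0)
    (hxmem : qpX k q ∈ Submodule.span k (Set.range fun p : ℕ × ℕ => v ^ p.1 * u ^ p.2))
    (hymem : qpY k q ∈ Submodule.span k (Set.range fun p : ℕ × ℕ => v ^ p.1 * u ^ p.2)) :
    ∃ a b : k, a ≠ 0 ∧ b ≠ 0 ∧ u = a • qpX k q ∧ v = b • qpY k q := by
  obtain ⟨du, hu⟩ := exists_isTop hu0
  obtain ⟨dv, hv⟩ := exists_isTop hv0
  obtain ⟨du', hu'⟩ := exists_isBot hu0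
  obtain ⟨dv', hv'⟩ := exists_isBot hv0
  have hrelT := rel_top hc hu hv
  have hrelB := rel_bot hc hu' hv'
  obtain ⟨hdu, hdv⟩ := ne_zero_of_rel hq1 hrelT
  obtain ⟨hdu', hdv'⟩ := ne_zero_of_rel hq1 hrelB
  obtain ⟨cx, hcx⟩ := Finsupp.mem_span_range_iff_exists_finsupp.mp hxmem
  obtain ⟨cy, hcy⟩ := Finsupp.mem_span_range_iff_exists_finsupp.mp hymem
  have hzx : ((0, 1) : ℕ × ℕ).1 + ((0, 1) : ℕ × ℕ).2 = 1 := rfl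
  have hzy : ((1, 0) : ℕ × ℕ).1 + ((1, 0) : ℕ × ℕ).2 = 1 := rfl
  have hXT := run_top hq0 hq1 hu hv hrelT hdu hdv hzx repr_x hcx.symm
  have hYT := run_top hq0 hq1 hu hv hrelT hdu hdv hzy repr_y hcy.symm
  have hXB := run_bot hq0 hq1 hu' hv' hrelB hdu' hdv' hzx repr_x hcx.symm
  have hYB := run_bot hq0 hq1 hu' hv' hrelB hdu' hdv' hzy repr_y hcy.symm
  obtain ⟨hduv, hdvv⟩ := resolve hq1 hqm1 hrelT hXT hYT
  obtain ⟨hduv', hdvv'⟩ := resolve hq1 hqm1 hrelB hXB hYB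
  -- supports are singletons
  have hsupp_u : ∀ e, ((B k q).repr u) e ≠ 0 → e = ((0 : ℕ), (1 : ℕ)) := by
    intro e he
    have h1 := hu.2 e he
    have h2 := hu'.2 e he
    rw [hduv] at h1
    rw [hduv'] at h2
    exact toLex.injective (le_antisymm h1 h2)
  have hsupp_v : ∀ e, ((B k q).repr v) e ≠ 0 → e = ((1 : ℕ), (0 : ℕ)) := by
    intro e he
    have h1 := hv.2 e he
    have h2 := hv'.2 e he
    rw [hdvv] at h1
    rw [hdvv'] at h2
    exact toLex.injective (le_antisymm h1 h2)
  have hru : (B k q).repr u = Finsupp.single ((0 : ℕ), (1 : ℕ)) (((B k q).repr u) (0, 1)) := by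
    ext e
    rcases eq_or_ne e ((0 : ℕ), (1 : ℕ)) with he | he
    · subst he; rw [Finsupp.single_apply, if_pos rfl]
    · rw [Finsupp.single_apply, if_neg (fun hh => he hh.symm)]
      by_contra hnz
      exact he (hsupp_u e hnz)
  have hrv : (B k q).repr v = Finsupp.single ((1 : ℕ), (0 : ℕ)) (((B k q).repr v) (1, 0)) := by
    ext e
    rcases eq_or_ne e ((1 : ℕ), (0 : ℕ)) with he | he
    · subst he; rw [Finsupp.single_apply, if_pos rfl]
    · rw [Finsupp.single_apply, if_neg (fun hh => he hh.symm)]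
      by_contra hnz
      exact he (hsupp_v e hnz)
  refine ⟨((B k q).repr u) (0, 1), ((B k q).repr v) (1, 0), ?_, ?_, ?_, ?_⟩
  · have := hu.1; rw [hduv] at this; exact this
  · have := hv.1; rw [hdvv] at this; exact this
  · conv_lhs => rw [← (B k q).repr.symm_apply_apply u]
    rw [hru, Module.Basis.repr_symm_single, B_apply, M_X, Finsupp.single_eq_same]
  · conv_lhs => rw [← (B k q).repr.symm_apply_apply v]
    rw [hrv, Module.Basis.repr_symm_single, B_apply, M_Y, Finsupp.single_eq_same]

end QAux

namespace QAux
variable {k : Type*} [Field k] {q : k}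

theorem W_mul {u v : QPlane k q} (hc : u * v = q • (v * u)) (p r : ℕ × ℕ) :
    (v ^ p.1 * u ^ p.2) * (v ^ r.1 * u ^ r.2) =
      q ^ (p.2 * r.1) • (v ^ (p + r).1 * u ^ (p + r).2) := by
  rw [mul_assoc, ← mul_assoc (u ^ p.2), pow_pow_comm_q hc, smul_mul_assoc, mul_smul_comm,
    ← mul_assoc, mul_assoc, Prod.fst_add, Prod.snd_add, pow_add, pow_add, mul_assoc, mul_assoc]

theorem mul_mem_spanW {u v : QPlane k q} (hc : u * v = q • (v * u)) {w₁ w₂ : QPlane k q}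
    (h₁ : w₁ ∈ Submodule.span k (Set.range fun p : ℕ × ℕ => v ^ p.1 * u ^ p.2))
    (h₂ : w₂ ∈ Submodule.span k (Set.range fun p : ℕ × ℕ => v ^ p.1 * u ^ p.2)) :
    w₁ * w₂ ∈ Submodule.span k (Set.range fun p : ℕ × ℕ => v ^ p.1 * u ^ p.2) := by
  induction h₁ using Submodule.span_induction with
  | mem a ha =>
    induction h₂ using Submodule.span_induction with
    | mem b hb =>
      obtain ⟨p, rfl⟩ := ha; obtain ⟨r, rfl⟩ := hb
      rw [W_mul hc]
      exact Submodule.smul_mem _ _ (Submodule.subset_span ⟨p + r, rfl⟩)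
    | zero => simp
    | add x y _ _ hx hy => rw [mul_add]; exact Submodule.add_mem _ hx hy
    | smul c x _ hx => rw [mul_smul_comm]; exact Submodule.smul_mem _ _ hx
  | zero => simp
  | add x y _ _ hx hy => rw [add_mul]; exact Submodule.add_mem _ hx hy
  | smul c x _ hx => rw [smul_mul_assoc]; exact Submodule.smul_mem _ _ hx

theorem spanW_top {u v : QPlane k q} (hc : u * v = q • (v * u))
    (hadj : Algebra.adjoin k {u, v} = ⊤) :
    Submodule.span k (Set.range fun p : ℕ × ℕ => v ^ p.1 * u ^ p.2) = ⊤ := by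
  rw [eq_top_iff]
  rintro w -
  have hw : w ∈ Algebra.adjoin k {u, v} := by rw [hadj]; trivial
  induction hw using Algebra.adjoin_induction with
  | mem a ha =>
    rcases ha with rfl | rfl
    · exact Submodule.subset_span ⟨(0, 1), by simp⟩
    · exact Submodule.subset_span ⟨(1, 0), by simp⟩
  | algebraMap c =>
    rw [Algebra.algebraMap_eq_smul_one]
    exact Submodule.smul_mem _ _ (Submodule.subset_span ⟨0, by simp⟩)
  | add x y _ _ hx hy => exact Submodule.add_mem _ hx hy
  | mul x y _ _ hx hy => exact mul_mem_spanW hc hx hy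

theorem qpX_ne_zero : qpX k q ≠ 0 := by
  intro h
  have h1 := repr_x (k := k) (q := q)
  rw [h, map_zero] at h1
  have h2 := congrArg (fun f : (ℕ × ℕ) →₀ k => f ((0 : ℕ), (1 : ℕ))) h1
  simp at h2

theorem qpY_ne_zero : qpY k q ≠ 0 := by
  intro h
  have h1 := repr_y (k := k) (q := q)
  rw [h, map_zero] at h1
  have h2 := congrArg (fun f : (ℕ × ℕ) →₀ k => f ((1 : ℕ), (0 : ℕ))) h1
  simp at h2

theorem main1 (hq0 : q ≠ 0) (hq1 : q ≠ 1) (hqm1 : q ≠ -1)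
    (φ : QPlane k q ≃ₐ[k] QPlane k q) :
    ∃ a b : kˣ, φ (qpX k q) = (a : k) • qpX k q ∧ φ (qpY k q) = (b : k) • qpY k q := by
  set u := φ (qpX k q) with hu_def
  set v := φ (qpY k q) with hv_def
  have hc : u * v = q • (v * u) := by
    have h1 := congrArg φ (qp_comm (k := k) (q := q))
    rw [map_mul, map_smul, map_mul] at h1
    exact h1
  have hu0 : u ≠ 0 := fun h =>
    qpX_ne_zero (φ.injective (show φ (qpX k q) = φ 0 by rw [map_zero, ← hu_def]; exact h))
  have hv0 : v ≠ 0 := fun h =>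
    qpY_ne_zero (φ.injective (show φ (qpY k q) = φ 0 by rw [map_zero, ← hv_def]; exact h))
  have hadj : Algebra.adjoin k {u, v} = ⊤ := by
    have h1 : Subalgebra.map φ.toAlgHom (Algebra.adjoin k {qpX k q, qpY k q}) =
        Algebra.adjoin k {u, v} := by
      rw [AlgHom.map_adjoin]
      congr 1
      exact Set.image_pair _ _ _
    rw [adjoin_xy, Algebra.map_top] at h1
    rw [← h1]
    exact (AlgHom.range_eq_top _).mpr φ.surjective
  have hspan := spanW_top hc hadj
  obtain ⟨a, b, ha, hb, hua, hvb⟩ := core hq0 hq1 hqm1 hc hu0 hv0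
    (by rw [hspan]; trivial) (by rw [hspan]; trivial)
  exact ⟨Units.mk0 a ha, Units.mk0 b hb, hua, hvb⟩

theorem hom_ext {f g : QPlane k q →ₐ[k] QPlane k q}
    (hx : f (qpX k q) = g (qpX k q)) (hy : f (qpY k q) = g (qpY k q)) : f = g := by
  apply AlgHom.ext
  intro w
  have hle : Algebra.adjoin k {qpX k q, qpY k q} ≤ AlgHom.equalizer f g := by
    apply Algebra.adjoin_le
    rintro w' (rfl | rfl)
    · exact hx
    · exact hy
  rw [adjoin_xy] at hle
  exact hle trivial

theorem aut_ext {φ₁ φ₂ : QPlane k q ≃ₐ[k] QPlane k q}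
    (hx : φ₁ (qpX k q) = φ₂ (qpX k q)) (hy : φ₁ (qpY k q) = φ₂ (qpY k q)) : φ₁ = φ₂ := by
  have h := hom_ext (f := φ₁.toAlgHom) (g := φ₂.toAlgHom) hx hy
  exact AlgEquiv.ext fun w => AlgHom.ext_iff.mp h w

/-- the diagonal endomorphism `x ↦ a x`, `y ↦ b y`. -/
noncomputable def D (q : k) (a b : k) : QPlane k q →ₐ[k] QPlane k q :=
  RingQuot.liftAlgHom k
    ⟨FreeAlgebra.lift k ![a • qpX k q, b • qpY k q], by
      rintro x y ⟨⟩
      simp only [map_mul, map_smul, FreeAlgebra.lift_ι_apply, Matrix.cons_val_zero,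
        Matrix.cons_val_one, Matrix.head_cons]
      rw [smul_mul_smul_comm, smul_mul_smul_comm, qp_comm, smul_smul, smul_smul]
      congr 1
      ring⟩

@[simp] theorem D_x (a b : k) : D q a b (qpX k q) = a • qpX k q := by
  unfold D
  conv_lhs => arg 2; unfold qpX
  rw [RingQuot.liftAlgHom_mkAlgHom_apply]
  simp

@[simp] theorem D_y (a b : k) : D q a b (qpY k q) = b • qpY k q := by
  unfold D
  conv_lhs => arg 2; unfold qpY
  rw [RingQuot.liftAlgHom_mkAlgHom_apply]
  simp

/-- the diagonal automorphism. -/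
noncomputable def psi (q : k) (ab : kˣ × kˣ) : QPlane k q ≃ₐ[k] QPlane k q :=
  AlgEquiv.ofAlgHom (D q (ab.1 : k) (ab.2 : k)) (D q ((ab.1⁻¹ : kˣ) : k) ((ab.2⁻¹ : kˣ) : k))
    (hom_ext (by simp [smul_smul]) (by simp [smul_smul]))
    (hom_ext (by simp [smul_smul]) (by simp [smul_smul]))

@[simp] theorem psi_x (ab : kˣ × kˣ) : psi q ab (qpX k q) = (ab.1 : k) • qpX k q := by
  simp [psi]

@[simp] theorem psi_y (ab : kˣ × kˣ) : psi q ab (qpY k q) = (ab.2 : k) • qpY k q := by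
  simp [psi]

/-- the torus inside the automorphism group. -/
noncomputable def Psi (q : k) : (kˣ × kˣ) →* (QPlane k q ≃ₐ[k] QPlane k q) where
  toFun := psi q
  map_one' := aut_ext (by simp) (by simp)
  map_mul' p r := aut_ext
    (by simp [AlgEquiv.aut_mul, AlgEquiv.trans_apply, smul_smul, mul_comm])
    (by simp [AlgEquiv.aut_mul, AlgEquiv.trans_apply, smul_smul, mul_comm])

end QAux


/-- for `q ∈ kˣ`, `q ∉ {1,-1}`, every `k`-algebra automorphism of the
quantum plane sends `x ↦ a·x`, `y ↦ b·y` for units `a, b`, and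
`Aut_k(Λ) ≅ (kˣ)²`. -/
theorem stmt_3 {k : Type*} [Field k] [CharZero k] (q : k) (hq0 : q ≠ 0)
    (hq1 : q ≠ 1) (hqm1 : q ≠ -1) :
    (∀ φ : QPlane k q ≃ₐ[k] QPlane k q,
      ∃ a b : kˣ,
        φ (qpX k q) = (a : k) • qpX k q ∧ φ (qpY k q) = (b : k) • qpY k q) ∧
    Nonempty ((QPlane k q ≃ₐ[k] QPlane k q) ≃* kˣ × kˣ) := by
  constructor
  · intro φ
    obtain ⟨a, b, hx, hy⟩ := QAux.main1 hq0 hq1 hqm1 φ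
    exact ⟨a, b, hx, hy⟩
  · have hinj : Function.Injective (QAux.Psi q) := by
      intro p r h
      have hx := congrArg (fun ψ : QPlane k q ≃ₐ[k] QPlane k q => ψ (qpX k q)) h
      have hy := congrArg (fun ψ : QPlane k q ≃ₐ[k] QPlane k q => ψ (qpY k q)) h
      simp only [QAux.Psi, MonoidHom.coe_mk, OneHom.coe_mk, QAux.psi_x, QAux.psi_y] at hx hy
      have h1 : (p.1 : k) = (r.1 : k) := smul_left_injective k QAux.qpX_ne_zero hx
      have h2 : (p.2 : k) = (r.2 : k) := smul_left_injective k QAux.qpY_ne_zero hy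
      exact Prod.ext (Units.ext h1) (Units.ext h2)
    have hsurj : Function.Surjective (QAux.Psi q) := by
      intro φ
      obtain ⟨a, b, hx, hy⟩ := QAux.main1 hq0 hq1 hqm1 φ
      refine ⟨(a, b), QAux.aut_ext ?_ ?_⟩
      · simp only [QAux.Psi, MonoidHom.coe_mk, OneHom.coe_mk, QAux.psi_x]
        rw [hx]
      · simp only [QAux.Psi, MonoidHom.coe_mk, OneHom.coe_mk, QAux.psi_y]
        rw [hy]
    exact ⟨(MulEquiv.ofBijective (QAux.Psi q) ⟨hinj, hsurj⟩).symm⟩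
end

section
/- Let k be a field and q ∈ k*, and let Λ = k_q[x,y] be the quantum plane with q = -1. Then the k-linear map τ exchanging x and y extends to a k-algebra automorphism of Λ, and Aut_k(Λ) is isomorphic to the semidirect product (k*)² ⋊ ⟨τ⟩ where ⟨τ⟩ ≅ ℤ/2 acts by swapping the two factors. -/
/-- The automorphism of `(kˣ)²` swapping the two factors. -/
def swapAut (k : Type*) [Field k] : MulAut (kˣ × kˣ) :=
  (MulEquiv.prodComm : kˣ × kˣ ≃* kˣ × kˣ)

/-- The action of `ℤ/2` on `(kˣ)²` by swapping the two factors. -/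
def swapHom (k : Type*) [Field k] : Multiplicative (ZMod 2) →* MulAut (kˣ × kˣ) :=
  AddMonoidHom.toMultiplicativeLeft
    (ZMod.lift 2 ⟨zmultiplesHom (Additive (MulAut (kˣ × kˣ))) (Additive.ofMul (swapAut k)),
      by
        show (2 : ℤ) • Additive.ofMul (swapAut k) = 0
        rw [two_zsmul]
        show Additive.ofMul (swapAut k * swapAut k) = 0
        have : swapAut k * swapAut k = 1 := by
          ext x <;> simp [swapAut, MulAut.mul_apply, MulEquiv.prodComm]
        rw [this]
        rfl⟩)

noncomputable section
namespace QP4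

variable (k : Type*) [Field k]

/-- index monoid : lex pairs of naturals -/
abbrev Idx := ℕ ×ₗ ℕ

abbrev M := Idx →₀ k

/-- the operator `x` acting on the monomial module -/
def Xop : M k →ₗ[k] M k :=
  Finsupp.lsum k fun p => Finsupp.lsingle (toLex ((ofLex p).1 + 1, (ofLex p).2))

/-- the operator `y` acting on the monomial module -/
def Yop : M k →ₗ[k] M k :=
  Finsupp.lsum k fun p =>
    ((-1 : k) ^ (ofLex p).1) • Finsupp.lsingle (toLex ((ofLex p).1, (ofLex p).2 + 1))

variable {k}

@[simp] lemma Xop_single (p : Idx) (c : k) :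
    Xop k (Finsupp.single p c) = Finsupp.single (toLex ((ofLex p).1 + 1, (ofLex p).2)) c := by
  simp [Xop]

@[simp] lemma Yop_single (p : Idx) (c : k) :
    Yop k (Finsupp.single p c)
      = ((-1 : k) ^ (ofLex p).1) • Finsupp.single (toLex ((ofLex p).1, (ofLex p).2 + 1)) c := by
  simp [Yop]

lemma op_rel : (Xop k) * (Yop k) = (-1 : k) • ((Yop k) * (Xop k)) := by
  apply Finsupp.lhom_ext
  intro p c
  simp only [Module.End.mul_apply, LinearMap.smul_apply, Xop_single, Yop_single, map_smul,
    smul_smul, ofLex_toLex]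
  congr 1
  rw [pow_succ]
  ring

variable (k)

/-- the representation of the quantum plane on the monomial module -/
def rep : QPlane k (-1) →ₐ[k] Module.End k (M k) :=
  RingQuot.liftAlgHom k
    ⟨FreeAlgebra.lift k ![Xop k, Yop k], by
      rintro _ _ ⟨⟩
      simp only [map_mul, map_smul, FreeAlgebra.lift_ι_apply]
      simpa using op_rel⟩

variable {k}

lemma rep_X : rep k (qpX k (-1)) = Xop k := by
  rw [qpX, rep, RingQuot.liftAlgHom_mkAlgHom_apply, FreeAlgebra.lift_ι_apply]
  rfl

lemma rep_Y : rep k (qpY k (-1)) = Yop k := by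
  rw [qpY, rep, RingQuot.liftAlgHom_mkAlgHom_apply, FreeAlgebra.lift_ι_apply]
  rfl

variable (k)

/-- coefficient extraction -/
def E : QPlane k (-1) →ₗ[k] M k :=
  (LinearMap.applyₗ (Finsupp.single (toLex (0,0)) (1:k))).comp (rep k).toLinearMap

/-- the monomial x^a y^b -/
def mon (p : Idx) : QPlane k (-1) := qpX k (-1) ^ (ofLex p).1 * qpY k (-1) ^ (ofLex p).2

variable {k}

lemma E_apply (z : QPlane k (-1)) : E k z = rep k z (Finsupp.single (toLex (0,0)) (1:k)) := rfl

lemma Xop_pow (a : ℕ) (p : Idx) (c : k) :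
    ((Xop k) ^ a) (Finsupp.single p c)
      = Finsupp.single (toLex ((ofLex p).1 + a, (ofLex p).2)) c := by
  induction a with
  | zero => simp
  | succ n ih =>
      rw [pow_succ', Module.End.mul_apply, ih, Xop_single]
      simp [add_assoc]

lemma Yop_pow (b : ℕ) : ∀ (j : ℕ) (c : k),
    ((Yop k) ^ b) (Finsupp.single (toLex (0, j)) c)
      = Finsupp.single (toLex (0, j + b)) c := by
  induction b with
  | zero => simp
  | succ n ih =>
      intro j c
      rw [pow_succ', Module.End.mul_apply, ih, Yop_single]
      simp [add_assoc]

lemma E_mon (p : Idx) : E k (mon k p) = Finsupp.single p 1 := by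
  rw [E_apply, mon, map_mul, map_pow, map_pow, rep_X, rep_Y]
  rw [Module.End.mul_apply, Yop_pow, Xop_pow]
  simp


section rels

lemma XY_rel : qpX k (-1) * qpY k (-1) = (-1:k) • (qpY k (-1) * qpX k (-1)) := by
  have h := RingQuot.mkAlgHom_rel k (QPlaneRel.rel (k := k) (q := -1))
  simp only [map_smul, map_mul] at h
  rw [qpX, qpY]
  exact h

lemma YX_rel : qpY k (-1) * qpX k (-1) = (-1:k) • (qpX k (-1) * qpY k (-1)) := by
  rw [XY_rel, smul_smul]; simp

lemma Y_pow_X (b : ℕ) :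
    qpY k (-1) ^ b * qpX k (-1) = ((-1:k)^b) • (qpX k (-1) * qpY k (-1) ^ b) := by
  induction b with
  | zero => simp
  | succ n ih =>
      rw [pow_succ, mul_assoc, YX_rel, mul_smul_comm, ← mul_assoc, ih, smul_mul_assoc,
        smul_smul, mul_assoc, ← pow_succ, pow_succ]
      congr 1
      ring

lemma Y_pow_X_pow (b c : ℕ) :
    qpY k (-1) ^ b * qpX k (-1) ^ c = ((-1:k)^(b*c)) • (qpX k (-1) ^ c * qpY k (-1) ^ b) := by
  induction c with
  | zero => simp
  | succ n ih =>
      rw [pow_succ, ← mul_assoc, ih, smul_mul_assoc, mul_assoc, Y_pow_X, mul_smul_comm,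
        smul_smul, ← mul_assoc]
      congr 1
      rw [← pow_add, Nat.mul_succ]

lemma mon_mul (p q : Idx) :
    mon k p * mon k q = ((-1:k)^((ofLex p).2 * (ofLex q).1)) • mon k (p + q) := by
  have h1 : (ofLex (p+q)).1 = (ofLex p).1 + (ofLex q).1 := rfl
  have h2 : (ofLex (p+q)).2 = (ofLex p).2 + (ofLex q).2 := rfl
  rw [mon, mon, mon, h1, h2, pow_add, pow_add]
  rw [mul_assoc, ← mul_assoc (qpY k (-1) ^ (ofLex p).2), Y_pow_X_pow, smul_mul_assoc,
    mul_smul_comm]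
  congr 1
  simp only [mul_assoc]

end rels

variable (k)

/-- realization of a finsupp as an element of the quantum plane -/
def sig : M k →ₗ[k] QPlane k (-1) :=
  Finsupp.lsum k fun p => LinearMap.toSpanSingleton k _ (mon k p)

variable {k}

@[simp] lemma sig_single (p : Idx) (c : k) :
    sig k (Finsupp.single p c) = c • mon k p := by
  simp [sig, LinearMap.toSpanSingleton_apply]

lemma sig_apply (m : M k) : sig k m = m.sum fun p c => c • mon k p := by
  rw [sig, Finsupp.lsum_apply]
  exact Finsupp.sum_congr fun p _ => rfl

lemma E_sig (m : M k) : E k (sig k m) = m := by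
  have h : (E k).comp (sig k) = LinearMap.id := by
    apply Finsupp.lhom_ext
    intro p c
    simp [E_mon, Finsupp.smul_single]
  exact LinearMap.congr_fun h m

lemma mon_mul_mem (a : Idx) (m' : M k) :
    mon k a * sig k m' ∈ LinearMap.range (sig k) := by
  induction m' using Finsupp.induction with
  | zero => simp
  | single_add p c f _ _ ih =>
      rw [map_add, mul_add]
      refine Submodule.add_mem _ ?_ ih
      rw [sig_single, mul_smul_comm, mon_mul, smul_smul]
      exact ⟨Finsupp.single (a + p) (c * (-1 : k) ^ ((ofLex a).2 * (ofLex p).1)),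
        by rw [sig_single]⟩

lemma mul_mem_range {z w : QPlane k (-1)} (hz : z ∈ LinearMap.range (sig k))
    (hw : w ∈ LinearMap.range (sig k)) : z * w ∈ LinearMap.range (sig k) := by
  obtain ⟨m, rfl⟩ := hz
  obtain ⟨m', rfl⟩ := hw
  induction m using Finsupp.induction with
  | zero => simp
  | single_add p c f _ _ ih =>
      rw [map_add, add_mul]
      refine Submodule.add_mem _ ?_ ih
      rw [sig_single, smul_mul_assoc]
      exact Submodule.smul_mem _ _ (mon_mul_mem p m')

lemma sig_surjective : Function.Surjective (sig k) := by
  intro z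
  suffices h : ∀ w : FreeAlgebra k (Fin 2),
      RingQuot.mkAlgHom k (QPlaneRel k (-1)) w ∈ LinearMap.range (sig k) by
    obtain ⟨w, rfl⟩ := RingQuot.mkAlgHom_surjective k (QPlaneRel k (-1)) z
    exact h w
  intro w
  induction w using FreeAlgebra.induction with
  | grade0 r =>
      refine ⟨Finsupp.single (toLex (0,0)) r, ?_⟩
      rw [sig_single, AlgHom.commutes, Algebra.algebraMap_eq_smul_one]
      simp [mon]
  | grade1 i =>
      fin_cases i
      · exact ⟨Finsupp.single (toLex (1,0)) 1, by simp [mon, qpX]⟩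
      · exact ⟨Finsupp.single (toLex (0,1)) 1, by simp [mon, qpY]⟩
  | mul a b iha ihb => rw [map_mul]; exact mul_mem_range iha ihb
  | add a b iha ihb => rw [map_add]; exact Submodule.add_mem _ iha ihb

lemma sig_E (z : QPlane k (-1)) : sig k (E k z) = z := by
  obtain ⟨m, rfl⟩ := sig_surjective z
  rw [E_sig]

lemma eq_zero_iff_E {z : QPlane k (-1)} : z = 0 ↔ E k z = 0 :=
  ⟨by rintro rfl; simp, fun h => by rw [← sig_E z, h, map_zero]⟩

lemma mul_expand (z w : QPlane k (-1)) :
    z * w = (E k z).sum fun p c => (E k w).sum fun q d =>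
      ((c * d) * (-1:k)^((ofLex p).2 * (ofLex q).1)) • mon k (p + q) := by
  conv_lhs => rw [← sig_E z, ← sig_E w, sig_apply, sig_apply]
  rw [Finsupp.sum_mul]
  refine Finsupp.sum_congr fun p _ => ?_
  rw [smul_mul_assoc, Finsupp.mul_sum, Finsupp.smul_sum]
  refine Finsupp.sum_congr fun q _ => ?_
  rw [mul_smul_comm, mon_mul, smul_smul, smul_smul, mul_assoc]

lemma E_mul (z w : QPlane k (-1)) :
    E k (z * w) = (E k z).sum fun p c => (E k w).sum fun q d =>
      ((c * d) * (-1:k)^((ofLex p).2 * (ofLex q).1)) • Finsupp.single (p + q) (1:k) := by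
  rw [mul_expand, map_finsuppSum]
  refine Finsupp.sum_congr fun p _ => ?_
  rw [map_finsuppSum]
  refine Finsupp.sum_congr fun q _ => ?_
  rw [map_smul, E_mon]

lemma E_mul_apply (z w : QPlane k (-1)) (t : Idx) :
    E k (z * w) t = (E k z).sum fun p c => (E k w).sum fun q d =>
      if p + q = t then (c * d) * (-1:k)^((ofLex p).2 * (ofLex q).1) else 0 := by
  rw [E_mul, Finsupp.sum_apply]
  refine Finsupp.sum_congr fun p _ => ?_
  rw [Finsupp.sum_apply]
  refine Finsupp.sum_congr fun q _ => ?_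
  rw [Finsupp.smul_apply, Finsupp.single_apply]
  simp [smul_ite]


/-! ### order facts on the index monoid -/

lemma idx_zero_le (p : Idx) : (0 : Idx) ≤ p := by
  rw [show (0 : Idx) = toLex (0,0) from rfl, show p = toLex (ofLex p) from rfl,
    Prod.Lex.le_iff]
  rcases Nat.eq_zero_or_pos (ofLex p).1 with h | h
  · exact Or.inr ⟨h.symm, Nat.zero_le _⟩
  · exact Or.inl h

lemma idx_add_eq_zero {p q : Idx} (h : p + q = 0) : p = 0 ∧ q = 0 := by
  have h1 : (ofLex p).1 + (ofLex q).1 = 0 := congrArg (fun r => (ofLex r).1) h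
  have h2 : (ofLex p).2 + (ofLex q).2 = 0 := congrArg (fun r => (ofLex r).2) h
  constructor
  · show toLex (ofLex p) = toLex ((0 : ℕ), (0 : ℕ))
    congr 1
    exact Prod.ext (by omega) (by omega)
  · show toLex (ofLex q) = toLex ((0 : ℕ), (0 : ℕ))
    congr 1
    exact Prod.ext (by omega) (by omega)

lemma X_eq_mon : qpX k (-1) = mon k (toLex (1,0)) := by simp [mon]
lemma Y_eq_mon : qpY k (-1) = mon k (toLex (0,1)) := by simp [mon]
lemma one_eq_mon : (1 : QPlane k (-1)) = mon k (toLex (0,0)) := by simp [mon]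
lemma mon_zero : mon k (0 : Idx) = 1 := by simp [mon]

lemma E_X : E k (qpX k (-1)) = Finsupp.single (toLex (1,0)) 1 := by
  rw [X_eq_mon, E_mon]
lemma E_Y : E k (qpY k (-1)) = Finsupp.single (toLex (0,1)) 1 := by
  rw [Y_eq_mon, E_mon]
lemma E_one : E k (1 : QPlane k (-1)) = Finsupp.single (toLex (0,0)) 1 := by
  rw [one_eq_mon, E_mon]

lemma X_ne_zero : qpX k (-1) ≠ 0 := by
  intro h0
  have := congrArg (E k) h0
  rw [E_X, map_zero] at this
  exact one_ne_zero (Finsupp.single_eq_zero.mp this)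

lemma Y_ne_zero : qpY k (-1) ≠ 0 := by
  intro h0
  have := congrArg (E k) h0
  rw [E_Y, map_zero] at this
  exact one_ne_zero (Finsupp.single_eq_zero.mp this)

lemma one_ne_zero' : (1 : QPlane k (-1)) ≠ 0 := by
  intro h0
  have := congrArg (E k) h0
  rw [E_one, map_zero] at this
  exact one_ne_zero (Finsupp.single_eq_zero.mp this)

/-! ### leading coefficients, domain, units -/

lemma exists_factor_of_mem_support_mul {z w : QPlane k (-1)} {t : Idx}
    (ht : t ∈ (E k (z * w)).support) :
    ∃ p ∈ (E k z).support, ∃ q ∈ (E k w).support, p + q = t := by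
  by_contra hc
  push_neg at hc
  have h0 : E k (z * w) t = 0 := by
    rw [E_mul_apply]
    rw [Finsupp.sum]
    refine Finset.sum_eq_zero fun p hp => ?_
    rw [Finsupp.sum]
    refine Finset.sum_eq_zero fun q hq => ?_
    rw [if_neg (hc p hp q hq)]
  exact Finsupp.mem_support_iff.mp ht h0

lemma coeff_top {z w : QPlane k (-1)} (hz : (E k z).support.Nonempty)
    (hw : (E k w).support.Nonempty) :
    E k (z * w) ((E k z).support.max' hz + (E k w).support.max' hw)
      = (E k z ((E k z).support.max' hz)) * (E k w ((E k w).support.max' hw))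
        * (-1:k)^((ofLex ((E k z).support.max' hz) ).2 * (ofLex ((E k w).support.max' hw)).1)
    := by
  set a := (E k z).support.max' hz with ha
  set b := (E k w).support.max' hw with hb
  have key : ∀ p ∈ (E k z).support, ∀ q ∈ (E k w).support, p + q = a + b → p = a ∧ q = b := by
    intro p hp q hq h
    have hpa : p ≤ a := Finset.le_max' _ _ hp
    have hqb : q ≤ b := Finset.le_max' _ _ hq
    have hp' : p = a := by
      rcases lt_or_eq_of_le hpa with hlt | he
      · exact absurd h (ne_of_lt (add_lt_add_of_lt_of_le hlt hqb))
      · exact he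
    exact ⟨hp', by subst hp'; exact add_left_cancel h⟩
  rw [E_mul_apply, Finsupp.sum]
  rw [Finset.sum_eq_single_of_mem a (Finset.max'_mem _ hz)]
  · rw [Finsupp.sum, Finset.sum_eq_single_of_mem b (Finset.max'_mem _ hw)]
    · rw [if_pos rfl]
    · intro q hq hqb
      rw [if_neg fun hh => hqb ((key a (Finset.max'_mem _ hz) q hq hh).2)]
  · intro p hp hpa
    rw [Finsupp.sum]
    refine Finset.sum_eq_zero fun q hq => ?_
    rw [if_neg fun hh => hpa ((key p hp q hq hh).1)]

lemma qp_mul_ne_zero {z w : QPlane k (-1)} (hz : z ≠ 0) (hw : w ≠ 0) : z * w ≠ 0 := by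
  have hz' : (E k z).support.Nonempty := by
    rw [Finsupp.support_nonempty_iff]
    exact fun h => hz (eq_zero_iff_E.mpr h)
  have hw' : (E k w).support.Nonempty := by
    rw [Finsupp.support_nonempty_iff]
    exact fun h => hw (eq_zero_iff_E.mpr h)
  intro h0
  have hcoef := coeff_top hz' hw'
  rw [h0, map_zero] at hcoef
  have h1 : E k z ((E k z).support.max' hz') ≠ 0 :=
    Finsupp.mem_support_iff.mp (Finset.max'_mem _ hz')
  have h2 : E k w ((E k w).support.max' hw') ≠ 0 :=
    Finsupp.mem_support_iff.mp (Finset.max'_mem _ hw')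
  have h3 : ((-1:k)^((ofLex ((E k z).support.max' hz')).2
      * (ofLex ((E k w).support.max' hw')).1)) ≠ 0 :=
    pow_ne_zero _ (neg_ne_zero.mpr one_ne_zero)
  exact (mul_ne_zero (mul_ne_zero h1 h2) h3) hcoef.symm

instance : NoZeroDivisors (QPlane k (-1)) where
  eq_zero_or_eq_zero_of_mul_eq_zero {a b} h := by
    by_contra hc
    push_neg at hc
    exact qp_mul_ne_zero hc.1 hc.2 h

lemma scalar_of_right_inv {u v : QPlane k (-1)} (h : u * v = 1) :
    ∃ c : k, c ≠ 0 ∧ u = c • (1 : QPlane k (-1)) := by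
  have hu : u ≠ 0 := by rintro rfl; rw [zero_mul] at h; exact one_ne_zero' h.symm
  have hv : v ≠ 0 := by rintro rfl; rw [mul_zero] at h; exact one_ne_zero' h.symm
  have hu' : (E k u).support.Nonempty := by
    rw [Finsupp.support_nonempty_iff]; exact fun hh => hu (eq_zero_iff_E.mpr hh)
  have hv' : (E k v).support.Nonempty := by
    rw [Finsupp.support_nonempty_iff]; exact fun hh => hv (eq_zero_iff_E.mpr hh)
  set a := (E k u).support.max' hu' with ha
  set b := (E k v).support.max' hv' with hb
  have hcoef := coeff_top hu' hv'
  rw [h, E_one] at hcoef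
  have h1 : E k u a ≠ 0 := Finsupp.mem_support_iff.mp (Finset.max'_mem _ hu')
  have h2 : E k v b ≠ 0 := Finsupp.mem_support_iff.mp (Finset.max'_mem _ hv')
  have h3 : ((-1:k)^((ofLex a).2 * (ofLex b).1)) ≠ 0 :=
    pow_ne_zero _ (neg_ne_zero.mpr one_ne_zero)
  have hab : a + b = toLex (0,0) := by
    by_contra hne
    rw [Finsupp.single_apply, if_neg (fun hh => hne hh.symm)] at hcoef
    exact mul_ne_zero (mul_ne_zero h1 h2) h3 hcoef.symm
  have ha0 : a = 0 := (idx_add_eq_zero hab).1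
  have hsupp : ∀ p ∈ (E k u).support, p = 0 := by
    intro p hp
    have := Finset.le_max' _ p hp
    rw [← ha] at this
    exact le_antisymm (ha0 ▸ this) (idx_zero_le p)
  refine ⟨E k u 0, ?_, ?_⟩
  · have : (0 : Idx) ∈ (E k u).support := by
      have := Finset.max'_mem _ hu'
      rwa [← ha, ha0] at this
    exact Finsupp.mem_support_iff.mp this
  · have hEu : E k u = Finsupp.single (0 : Idx) (E k u 0) := by
      ext t
      by_cases hteq : t = 0
      · subst hteq; rw [Finsupp.single_apply, if_pos rfl]
      · rw [Finsupp.single_apply, if_neg (fun hh => hteq hh.symm)]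
        by_contra hne
        exact hteq (hsupp t (Finsupp.mem_support_iff.mpr hne))
    calc u = sig k (E k u) := (sig_E u).symm
    _ = (E k u 0) • mon k 0 := by conv_lhs => rw [hEu, sig_single]
    _ = (E k u 0) • 1 := by rw [mon_zero]


/-! ### the two projections to polynomial rings -/

variable (k)

/-- the algebra map killing `y` -/
def px : QPlane k (-1) →ₐ[k] Polynomial k :=
  RingQuot.liftAlgHom k
    ⟨FreeAlgebra.lift k ![Polynomial.X, 0], by
      rintro _ _ ⟨⟩
      simp [FreeAlgebra.lift_ι_apply]⟩

/-- the algebra map killing `x` -/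
def py : QPlane k (-1) →ₐ[k] Polynomial k :=
  RingQuot.liftAlgHom k
    ⟨FreeAlgebra.lift k ![0, Polynomial.X], by
      rintro _ _ ⟨⟩
      simp [FreeAlgebra.lift_ι_apply]⟩

variable {k}

@[simp] lemma px_X : px k (qpX k (-1)) = Polynomial.X := by
  rw [qpX, px, RingQuot.liftAlgHom_mkAlgHom_apply, FreeAlgebra.lift_ι_apply]; rfl

@[simp] lemma px_Y : px k (qpY k (-1)) = 0 := by
  rw [qpY, px, RingQuot.liftAlgHom_mkAlgHom_apply, FreeAlgebra.lift_ι_apply]; rfl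

@[simp] lemma py_X : py k (qpX k (-1)) = 0 := by
  rw [qpX, py, RingQuot.liftAlgHom_mkAlgHom_apply, FreeAlgebra.lift_ι_apply]; rfl

@[simp] lemma py_Y : py k (qpY k (-1)) = Polynomial.X := by
  rw [qpY, py, RingQuot.liftAlgHom_mkAlgHom_apply, FreeAlgebra.lift_ι_apply]; rfl

lemma px_mon (p : Idx) :
    px k (mon k p) = if (ofLex p).2 = 0 then Polynomial.X ^ (ofLex p).1 else 0 := by
  rw [mon, map_mul, map_pow, map_pow, px_X, px_Y]
  by_cases h : (ofLex p).2 = 0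
  · simp [h]
  · simp [h, zero_pow h]

lemma py_mon (p : Idx) :
    py k (mon k p) = if (ofLex p).1 = 0 then Polynomial.X ^ (ofLex p).2 else 0 := by
  rw [mon, map_mul, map_pow, map_pow, py_X, py_Y]
  by_cases h : (ofLex p).1 = 0
  · simp [h]
  · simp [h, zero_pow h]

lemma coeff_px (z : QPlane k (-1)) (n : ℕ) :
    (px k z).coeff n = E k z (toLex (n, 0)) := by
  conv_lhs => rw [← sig_E z, sig_apply]
  rw [map_finsuppSum, Finsupp.sum, Polynomial.finset_sum_coeff]
  have hterm : ∀ p : Idx,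
      (px k ((E k z) p • mon k p)).coeff n
        = if p = toLex (n,0) then E k z p else 0 := by
    intro p
    rw [map_smul, Polynomial.coeff_smul, px_mon]
    by_cases h2 : (ofLex p).2 = 0
    · rw [if_pos h2, Polynomial.coeff_X_pow]
      by_cases h1 : n = (ofLex p).1
      · have hp : p = toLex (n, 0) := by
          show toLex (ofLex p) = _
          congr 1
          exact Prod.ext h1.symm h2
        rw [if_pos h1, if_pos hp, smul_eq_mul, mul_one]
      · have hp : p ≠ toLex (n, 0) := by
          intro hh
          exact h1 (by simp [hh])
        rw [if_neg h1, if_neg hp, smul_eq_mul, mul_zero]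
    · have hp : p ≠ toLex (n, 0) := by
        intro hh
        rw [hh] at h2
        exact h2 rfl
      rw [if_neg h2, if_neg hp]
      simp
  rw [Finset.sum_congr rfl fun p _ => hterm p]
  by_cases hmem : toLex (n,0) ∈ (E k z).support
  · rw [Finset.sum_ite_eq' _ _ (fun p => E k z p), if_pos hmem]
  · rw [Finset.sum_ite_eq' _ _ (fun p => E k z p), if_neg hmem]
    exact (Finsupp.notMem_support_iff.mp hmem).symm

lemma coeff_py (z : QPlane k (-1)) (n : ℕ) :
    (py k z).coeff n = E k z (toLex (0, n)) := by
  conv_lhs => rw [← sig_E z, sig_apply]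
  rw [map_finsuppSum, Finsupp.sum, Polynomial.finset_sum_coeff]
  have hterm : ∀ p : Idx,
      (py k ((E k z) p • mon k p)).coeff n
        = if p = toLex (0,n) then E k z p else 0 := by
    intro p
    rw [map_smul, Polynomial.coeff_smul, py_mon]
    by_cases h2 : (ofLex p).1 = 0
    · rw [if_pos h2, Polynomial.coeff_X_pow]
      by_cases h1 : n = (ofLex p).2
      · have hp : p = toLex (0, n) := by
          show toLex (ofLex p) = _
          congr 1
          exact Prod.ext h2 h1.symm
        rw [if_pos h1, if_pos hp, smul_eq_mul, mul_one]
      · have hp : p ≠ toLex (0, n) := by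
          intro hh
          exact h1 (by simp [hh])
        rw [if_neg h1, if_neg hp, smul_eq_mul, mul_zero]
    · have hp : p ≠ toLex (0, n) := by
        intro hh
        rw [hh] at h2
        exact h2 rfl
      rw [if_neg h2, if_neg hp]
      simp
  rw [Finset.sum_congr rfl fun p _ => hterm p]
  by_cases hmem : toLex (0,n) ∈ (E k z).support
  · rw [Finset.sum_ite_eq' _ _ (fun p => E k z p), if_pos hmem]
  · rw [Finset.sum_ite_eq' _ _ (fun p => E k z p), if_neg hmem]
    exact (Finsupp.notMem_support_iff.mp hmem).symm

lemma px_eq_zero_iff {z : QPlane k (-1)} :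
    px k z = 0 ↔ ∀ n, E k z (toLex (n, 0)) = 0 := by
  rw [Polynomial.ext_iff]
  simp [coeff_px]

lemma py_eq_zero_iff {z : QPlane k (-1)} :
    py k z = 0 ↔ ∀ n, E k z (toLex (0, n)) = 0 := by
  rw [Polynomial.ext_iff]
  simp [coeff_py]


/-! ### divisibility by the generators -/

lemma XY_eq_mon : qpX k (-1) * qpY k (-1) = mon k (toLex (1,1)) := by simp [mon]

lemma neg_one_pow_sq (a : ℕ) : ((-1:k)^a) * ((-1:k)^a) = 1 := by
  rw [← pow_add]
  exact Even.neg_one_pow ⟨a, rfl⟩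

lemma dvd_X_of {z : QPlane k (-1)} (h : ∀ j, E k z (toLex (0, j)) = 0) :
    ∃ w, z = qpX k (-1) * w := by
  refine ⟨sig k ((E k z).sum fun p c =>
    Finsupp.single (toLex ((ofLex p).1 - 1, (ofLex p).2)) c), ?_⟩
  rw [map_finsuppSum, Finsupp.mul_sum]
  conv_lhs => rw [← sig_E z, sig_apply]
  refine Finsupp.sum_congr fun p hp => ?_
  have ha : (ofLex p).1 ≠ 0 := by
    intro h0
    have hp0 : p = toLex (0, (ofLex p).2) := by
      show toLex (ofLex p) = _
      congr 1
      exact Prod.ext h0 rfl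
    exact Finsupp.mem_support_iff.mp hp (by rw [hp0]; exact h _)
  rw [sig_single, mul_smul_comm, X_eq_mon, mon_mul]
  have hidx : toLex (1,0) + toLex ((ofLex p).1 - 1, (ofLex p).2) = p := by
    show toLex ((1,0) + ((ofLex p).1 - 1, (ofLex p).2)) = toLex (ofLex p)
    congr 1
    exact Prod.ext (by simp; omega) (by simp)
  rw [hidx]
  norm_num

lemma dvd_Y_of {z : QPlane k (-1)} (h : ∀ i, E k z (toLex (i, 0)) = 0) :
    ∃ w, z = qpY k (-1) * w := by
  refine ⟨sig k ((E k z).sum fun p c =>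
    Finsupp.single (toLex ((ofLex p).1, (ofLex p).2 - 1)) (((-1:k)^(ofLex p).1) * c)), ?_⟩
  rw [map_finsuppSum, Finsupp.mul_sum]
  conv_lhs => rw [← sig_E z, sig_apply]
  refine Finsupp.sum_congr fun p hp => ?_
  have hb : (ofLex p).2 ≠ 0 := by
    intro h0
    have hp0 : p = toLex ((ofLex p).1, 0) := by
      show toLex (ofLex p) = _
      congr 1
      exact Prod.ext rfl h0
    exact Finsupp.mem_support_iff.mp hp (by rw [hp0]; exact h _)
  rw [sig_single, mul_smul_comm, Y_eq_mon, mon_mul]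
  have hidx : toLex (0,1) + toLex ((ofLex p).1, (ofLex p).2 - 1) = p := by
    show toLex ((0,1) + ((ofLex p).1, (ofLex p).2 - 1)) = toLex (ofLex p)
    congr 1
    exact Prod.ext (by simp) (by simp; omega)
  rw [hidx, smul_smul]
  congr 1
  have : (ofLex (toLex ((ofLex p).1, (ofLex p).2 - 1))).1 = (ofLex p).1 := rfl
  rw [this]
  simp only [ofLex_toLex, one_mul]
  symm
  calc ((-1:k)^(ofLex p).1 * E k z p) * ((-1:k)^(ofLex p).1)
      = (((-1:k)^(ofLex p).1) * ((-1:k)^(ofLex p).1)) * E k z p := by ring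
  _ = E k z p := by rw [neg_one_pow_sq, one_mul]

lemma dvd_XY_of {z : QPlane k (-1)} (h0 : ∀ j, E k z (toLex (0, j)) = 0)
    (h1 : ∀ i, E k z (toLex (i, 0)) = 0) :
    ∃ w, z = (qpX k (-1) * qpY k (-1)) * w := by
  refine ⟨sig k ((E k z).sum fun p c =>
    Finsupp.single (toLex ((ofLex p).1 - 1, (ofLex p).2 - 1))
      (((-1:k)^((ofLex p).1 - 1)) * c)), ?_⟩
  rw [map_finsuppSum, Finsupp.mul_sum]
  conv_lhs => rw [← sig_E z, sig_apply]
  refine Finsupp.sum_congr fun p hp => ?_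
  have ha : (ofLex p).1 ≠ 0 := by
    intro hz0
    exact Finsupp.mem_support_iff.mp hp
      (by rw [show p = toLex (0, (ofLex p).2) from by
            show toLex (ofLex p) = _
            congr 1
            exact Prod.ext hz0 rfl]
          exact h0 _)
  have hb : (ofLex p).2 ≠ 0 := by
    intro hz0
    exact Finsupp.mem_support_iff.mp hp
      (by rw [show p = toLex ((ofLex p).1, 0) from by
            show toLex (ofLex p) = _
            congr 1
            exact Prod.ext rfl hz0]
          exact h1 _)
  rw [sig_single, mul_smul_comm, XY_eq_mon, mon_mul]
  have hidx : toLex (1,1) + toLex ((ofLex p).1 - 1, (ofLex p).2 - 1) = p := by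
    show toLex ((1,1) + ((ofLex p).1 - 1, (ofLex p).2 - 1)) = toLex (ofLex p)
    congr 1
    exact Prod.ext (by simp; omega) (by simp; omega)
  rw [hidx, smul_smul]
  congr 1
  have h2 : (ofLex (toLex ((ofLex p).1 - 1, (ofLex p).2 - 1))).1 = (ofLex p).1 - 1 := rfl
  rw [h2]
  simp only [ofLex_toLex, one_mul]
  symm
  calc ((-1:k)^((ofLex p).1 - 1) * E k z p) * ((-1:k)^((ofLex p).1 - 1))
      = (((-1:k)^((ofLex p).1 - 1)) * ((-1:k)^((ofLex p).1 - 1))) * E k z p := by ring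
  _ = E k z p := by rw [neg_one_pow_sq, one_mul]

lemma E_X_mul (w : QPlane k (-1)) (j : ℕ) :
    E k (qpX k (-1) * w) (toLex (0, j)) = 0 := by
  by_contra hne
  obtain ⟨p, hp, q, hq, hpq⟩ :=
    exists_factor_of_mem_support_mul (Finsupp.mem_support_iff.mpr hne)
  rw [E_X] at hp
  have hp1 : p = toLex (1,0) := by
    have := Finsupp.support_single_subset hp
    simpa using this
  subst hp1
  have := congrArg (fun r => (ofLex r).1) hpq
  simp at this

lemma E_Y_mul (w : QPlane k (-1)) (i : ℕ) :
    E k (qpY k (-1) * w) (toLex (i, 0)) = 0 := by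
  by_contra hne
  obtain ⟨p, hp, q, hq, hpq⟩ :=
    exists_factor_of_mem_support_mul (Finsupp.mem_support_iff.mpr hne)
  rw [E_Y] at hp
  have hp1 : p = toLex (0,1) := by
    have := Finsupp.support_single_subset hp
    simpa using this
  subst hp1
  have := congrArg (fun r => (ofLex r).2) hpq
  simp at this


/-! ### classification of automorphisms -/

section classification
variable [CharZero k]

lemma comm_target_zero {u v : Polynomial k} (h : u * v = (-1:k) • (v * u)) : u * v = 0 := by
  rw [mul_comm v u, neg_smul, one_smul] at h
  have h0 : u * v + u * v = 0 := by nth_rewrite 2 [h]; exact add_neg_cancel _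
  have h2 : (2:k) • (u * v) = 0 := by rw [two_smul]; exact h0
  rcases smul_eq_zero.mp h2 with h | h
  · exact absurd h two_ne_zero
  · exact h

lemma proj_mul_zero (g : QPlane k (-1) →ₐ[k] Polynomial k)
    (P Q : QPlane k (-1)) (hPQ : P * Q = (-1:k) • (Q * P)) : g P * g Q = 0 := by
  apply comm_target_zero
  rw [← map_mul, ← map_mul, ← map_smul, hPQ]

lemma auto_shape (φ : QPlane k (-1) ≃ₐ[k] QPlane k (-1)) :
    ((∃ u, φ (qpX k (-1)) = qpX k (-1) * u) ∧ (∃ v, φ (qpY k (-1)) = qpY k (-1) * v))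
    ∨ ((∃ u, φ (qpX k (-1)) = qpY k (-1) * u)
        ∧ (∃ v, φ (qpY k (-1)) = qpX k (-1) * v)) := by
  have hrel : φ (qpX k (-1)) * φ (qpY k (-1))
      = (-1:k) • (φ (qpY k (-1)) * φ (qpX k (-1))) := by
    have h := congrArg φ (XY_rel (k := k))
    rw [map_mul, map_smul, map_mul] at h
    exact h
  have hrel' : φ.symm (qpX k (-1)) * φ.symm (qpY k (-1))
      = (-1:k) • (φ.symm (qpY k (-1)) * φ.symm (qpX k (-1))) := by
    have h := congrArg φ.symm (XY_rel (k := k))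
    rw [map_mul, map_smul, map_mul] at h
    exact h
  have hx : px k (φ (qpX k (-1))) * px k (φ (qpY k (-1))) = 0 :=
    proj_mul_zero (px k) _ _ hrel
  have hy : py k (φ (qpX k (-1))) * py k (φ (qpY k (-1))) = 0 :=
    proj_mul_zero (py k) _ _ hrel
  have hfC : ¬ (px k (φ (qpX k (-1))) = 0 ∧ py k (φ (qpX k (-1))) = 0) := by
    rintro ⟨h1, h2⟩
    obtain ⟨w, hw⟩ := dvd_XY_of (py_eq_zero_iff.mp h2) (px_eq_zero_iff.mp h1)
    have hX : qpX k (-1)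
        = φ.symm (qpX k (-1)) * φ.symm (qpY k (-1)) * φ.symm w := by
      calc qpX k (-1) = φ.symm (φ (qpX k (-1))) := (φ.symm_apply_apply _).symm
      _ = _ := by rw [hw, map_mul, map_mul]
    have h0 : px k (qpX k (-1)) = 0 := by
      rw [hX, map_mul, map_mul]
      rw [show px k (φ.symm (qpX k (-1))) * px k (φ.symm (qpY k (-1))) = 0 from
        proj_mul_zero (px k) _ _ hrel', zero_mul]
    rw [px_X] at h0
    exact Polynomial.X_ne_zero h0
  have hgC : ¬ (px k (φ (qpY k (-1))) = 0 ∧ py k (φ (qpY k (-1))) = 0) := by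
    rintro ⟨h1, h2⟩
    obtain ⟨w, hw⟩ := dvd_XY_of (py_eq_zero_iff.mp h2) (px_eq_zero_iff.mp h1)
    have hY : qpY k (-1)
        = φ.symm (qpX k (-1)) * φ.symm (qpY k (-1)) * φ.symm w := by
      calc qpY k (-1) = φ.symm (φ (qpY k (-1))) := (φ.symm_apply_apply _).symm
      _ = _ := by rw [hw, map_mul, map_mul]
    have h0 : py k (qpY k (-1)) = 0 := by
      rw [hY, map_mul, map_mul]
      rw [show py k (φ.symm (qpX k (-1))) * py k (φ.symm (qpY k (-1))) = 0 from
        proj_mul_zero (py k) _ _ hrel', zero_mul]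
    rw [py_Y] at h0
    exact Polynomial.X_ne_zero h0
  by_cases hpxf : px k (φ (qpX k (-1))) = 0
  · have hpyf : py k (φ (qpX k (-1))) ≠ 0 := fun hh => hfC ⟨hpxf, hh⟩
    have hpyg : py k (φ (qpY k (-1))) = 0 := by
      rcases mul_eq_zero.mp hy with h | h
      · exact absurd h hpyf
      · exact h
    exact Or.inr ⟨dvd_Y_of (px_eq_zero_iff.mp hpxf), dvd_X_of (py_eq_zero_iff.mp hpyg)⟩
  · have hpxg : px k (φ (qpY k (-1))) = 0 := by
      rcases mul_eq_zero.mp hx with h | h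
      · exact absurd h hpxf
      · exact h
    have hpyg : py k (φ (qpY k (-1))) ≠ 0 := fun hh => hgC ⟨hpxg, hh⟩
    have hpyf : py k (φ (qpX k (-1))) = 0 := by
      rcases mul_eq_zero.mp hy with h | h
      · exact h
      · exact absurd h hpyg
    exact Or.inl ⟨dvd_X_of (py_eq_zero_iff.mp hpyf), dvd_Y_of (px_eq_zero_iff.mp hpxg)⟩

lemma classify (φ : QPlane k (-1) ≃ₐ[k] QPlane k (-1)) :
    (∃ c d : k, c ≠ 0 ∧ d ≠ 0 ∧ φ (qpX k (-1)) = c • qpX k (-1)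
      ∧ φ (qpY k (-1)) = d • qpY k (-1))
    ∨ (∃ c d : k, c ≠ 0 ∧ d ≠ 0 ∧ φ (qpX k (-1)) = c • qpY k (-1)
      ∧ φ (qpY k (-1)) = d • qpX k (-1)) := by
  rcases auto_shape φ with ⟨⟨u, hu⟩, ⟨v, hv⟩⟩ | ⟨⟨u, hu⟩, ⟨v, hv⟩⟩
  · rcases auto_shape φ.symm with ⟨⟨u', hu'⟩, ⟨v', hv'⟩⟩ | ⟨⟨u', hu'⟩, ⟨v', hv'⟩⟩
    · have h1 : qpX k (-1) * 1 = qpX k (-1) * (u * φ u') := by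
        conv_lhs => rw [mul_one, ← φ.apply_symm_apply (qpX k (-1)), hu']
        rw [map_mul, hu, mul_assoc]
      have h2 : u * φ u' = 1 := (mul_left_cancel₀ X_ne_zero h1).symm
      obtain ⟨c, hc, hcu⟩ := scalar_of_right_inv h2
      have h1y : qpY k (-1) * 1 = qpY k (-1) * (v * φ v') := by
        conv_lhs => rw [mul_one, ← φ.apply_symm_apply (qpY k (-1)), hv']
        rw [map_mul, hv, mul_assoc]
      have h2y : v * φ v' = 1 := (mul_left_cancel₀ Y_ne_zero h1y).symm
      obtain ⟨d, hd, hdv⟩ := scalar_of_right_inv h2y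
      refine Or.inl ⟨c, d, hc, hd, ?_, ?_⟩
      · rw [hu, hcu, mul_smul_comm, mul_one]
      · rw [hv, hdv, mul_smul_comm, mul_one]
    · exfalso
      have hX : qpX k (-1) = qpY k (-1) * (v * φ u') := by
        conv_lhs => rw [← φ.apply_symm_apply (qpX k (-1)), hu']
        rw [map_mul, hv, mul_assoc]
      have hz := E_Y_mul (v * φ u') 1
      rw [← hX, E_X] at hz
      simp [Finsupp.single_apply] at hz
  · rcases auto_shape φ.symm with ⟨⟨u', hu'⟩, ⟨v', hv'⟩⟩ | ⟨⟨u', hu'⟩, ⟨v', hv'⟩⟩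
    · exfalso
      have hX : qpX k (-1) = qpY k (-1) * (u * φ u') := by
        conv_lhs => rw [← φ.apply_symm_apply (qpX k (-1)), hu']
        rw [map_mul, hu, mul_assoc]
      have hz := E_Y_mul (u * φ u') 1
      rw [← hX, E_X] at hz
      simp [Finsupp.single_apply] at hz
    · have h1 : qpX k (-1) * 1 = qpX k (-1) * (v * φ u') := by
        conv_lhs => rw [mul_one, ← φ.apply_symm_apply (qpX k (-1)), hu']
        rw [map_mul, hv, mul_assoc]
      have h2 : v * φ u' = 1 := (mul_left_cancel₀ X_ne_zero h1).symm
      obtain ⟨d, hd, hdv⟩ := scalar_of_right_inv h2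
      have h1y : qpY k (-1) * 1 = qpY k (-1) * (u * φ v') := by
        conv_lhs => rw [mul_one, ← φ.apply_symm_apply (qpY k (-1)), hv']
        rw [map_mul, hu, mul_assoc]
      have h2y : u * φ v' = 1 := (mul_left_cancel₀ Y_ne_zero h1y).symm
      obtain ⟨c, hc, hcu⟩ := scalar_of_right_inv h2y
      refine Or.inr ⟨c, d, hc, hd, ?_, ?_⟩
      · rw [hu, hcu, mul_smul_comm, mul_one]
      · rw [hv, hdv, mul_smul_comm, mul_one]

end classification


/-! ### construction of automorphisms -/

variable (k)

/-- algebra endomorphism defined by images of the generators -/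
def genHom (u v : QPlane k (-1)) (h : u * v = (-1:k) • (v * u)) :
    QPlane k (-1) →ₐ[k] QPlane k (-1) :=
  RingQuot.liftAlgHom k
    ⟨FreeAlgebra.lift k ![u, v], by
      rintro _ _ ⟨⟩
      simp only [map_mul, map_smul, FreeAlgebra.lift_ι_apply, Matrix.cons_val_zero,
        Matrix.cons_val_one, Matrix.head_cons]
      exact h⟩

variable {k}

@[simp] lemma genHom_X (u v : QPlane k (-1)) (h) :
    genHom k u v h (qpX k (-1)) = u := by
  rw [qpX, genHom, RingQuot.liftAlgHom_mkAlgHom_apply, FreeAlgebra.lift_ι_apply]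
  rfl

@[simp] lemma genHom_Y (u v : QPlane k (-1)) (h) :
    genHom k u v h (qpY k (-1)) = v := by
  rw [qpY, genHom, RingQuot.liftAlgHom_mkAlgHom_apply, FreeAlgebra.lift_ι_apply]
  rfl

lemma algHom_ext {A : Type*} [Semiring A] [Algebra k A]
    {f g : QPlane k (-1) →ₐ[k] A}
    (h1 : f (qpX k (-1)) = g (qpX k (-1))) (h2 : f (qpY k (-1)) = g (qpY k (-1))) :
    f = g := by
  have hcomp : f.comp (RingQuot.mkAlgHom k (QPlaneRel k (-1)))
      = g.comp (RingQuot.mkAlgHom k (QPlaneRel k (-1))) := by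
    apply FreeAlgebra.hom_ext
    funext i
    fin_cases i
    · simpa [qpX] using h1
    · simpa [qpY] using h2
  apply AlgHom.ext
  intro z
  obtain ⟨w, rfl⟩ := RingQuot.mkAlgHom_surjective k (QPlaneRel k (-1)) z
  exact AlgHom.congr_fun hcomp w

lemma equiv_ext {φ ψ : QPlane k (-1) ≃ₐ[k] QPlane k (-1)}
    (h1 : φ (qpX k (-1)) = ψ (qpX k (-1))) (h2 : φ (qpY k (-1)) = ψ (qpY k (-1))) :
    φ = ψ := by
  have := algHom_ext (f := (φ : QPlane k (-1) →ₐ[k] QPlane k (-1)))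
    (g := (ψ : QPlane k (-1) →ₐ[k] QPlane k (-1))) h1 h2
  exact AlgEquiv.ext fun z => AlgHom.congr_fun this z

variable (k)

lemma scale_rel (a b : k) :
    (a • qpX k (-1)) * (b • qpY k (-1)) = (-1:k) • ((b • qpY k (-1)) * (a • qpX k (-1))) := by
  rw [smul_mul_assoc, mul_smul_comm, smul_mul_assoc, mul_smul_comm, XY_rel]
  rw [smul_smul, smul_smul, smul_smul, smul_smul]
  congr 1
  ring

/-- scaling endomorphism -/
def scaleHom (a b : k) : QPlane k (-1) →ₐ[k] QPlane k (-1) :=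
  genHom k (a • qpX k (-1)) (b • qpY k (-1)) (scale_rel k a b)

@[simp] lemma scaleHom_X (a b : k) : scaleHom k a b (qpX k (-1)) = a • qpX k (-1) :=
  genHom_X _ _ _

@[simp] lemma scaleHom_Y (a b : k) : scaleHom k a b (qpY k (-1)) = b • qpY k (-1) :=
  genHom_Y _ _ _

/-- scaling automorphism -/
def scaleAut (a b : kˣ) : QPlane k (-1) ≃ₐ[k] QPlane k (-1) :=
  AlgEquiv.ofAlgHom (scaleHom k a b) (scaleHom k a⁻¹ b⁻¹)
    (algHom_ext
      (by
        have hinv : (a : k) * ((a⁻¹ : kˣ) : k) = 1 := by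
          rw [← Units.val_mul, mul_inv_cancel, Units.val_one]
        simp [map_smul, smul_smul, hinv])
      (by
        have hinv : (b : k) * ((b⁻¹ : kˣ) : k) = 1 := by
          rw [← Units.val_mul, mul_inv_cancel, Units.val_one]
        simp [map_smul, smul_smul, hinv]))
    (algHom_ext
      (by
        have hinv : ((a⁻¹ : kˣ) : k) * (a : k) = 1 := by
          rw [← Units.val_mul, inv_mul_cancel, Units.val_one]
        simp [map_smul, smul_smul, hinv])
      (by
        have hinv : ((b⁻¹ : kˣ) : k) * (b : k) = 1 := by
          rw [← Units.val_mul, inv_mul_cancel, Units.val_one]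
        simp [map_smul, smul_smul, hinv]))

@[simp] lemma scaleAut_X (a b : kˣ) :
    scaleAut k a b (qpX k (-1)) = (a : k) • qpX k (-1) := scaleHom_X k a b

@[simp] lemma scaleAut_Y (a b : kˣ) :
    scaleAut k a b (qpY k (-1)) = (b : k) • qpY k (-1) := scaleHom_Y k a b

lemma tau_rel : qpY k (-1) * qpX k (-1) = (-1:k) • (qpX k (-1) * qpY k (-1)) := YX_rel

/-- the swap automorphism τ -/
def tauAut : QPlane k (-1) ≃ₐ[k] QPlane k (-1) :=
  AlgEquiv.ofAlgHom (genHom k (qpY k (-1)) (qpX k (-1)) (tau_rel k))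
    (genHom k (qpY k (-1)) (qpX k (-1)) (tau_rel k))
    (algHom_ext (by simp) (by simp))
    (algHom_ext (by simp) (by simp))

@[simp] lemma tauAut_X : tauAut k (qpX k (-1)) = qpY k (-1) := genHom_X _ _ _
@[simp] lemma tauAut_Y : tauAut k (qpY k (-1)) = qpX k (-1) := genHom_Y _ _ _

lemma tau_sq : tauAut k * tauAut k = 1 :=
  equiv_ext (by simp [AlgEquiv.mul_apply, AlgEquiv.one_apply])
    (by simp [AlgEquiv.mul_apply, AlgEquiv.one_apply])

lemma tau_inv : (tauAut k)⁻¹ = tauAut k := inv_eq_of_mul_eq_one_right (tau_sq k)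

/-- the torus of scaling automorphisms, as a group hom -/
def theta : kˣ × kˣ →* (QPlane k (-1) ≃ₐ[k] QPlane k (-1)) where
  toFun p := scaleAut k p.1 p.2
  map_one' := equiv_ext (by simp [AlgEquiv.one_apply]) (by simp [AlgEquiv.one_apply])
  map_mul' p q := equiv_ext
    (by
      simp [AlgEquiv.mul_apply, map_smul, smul_smul]
      congr 1
      ring)
    (by
      simp [AlgEquiv.mul_apply, map_smul, smul_smul]
      congr 1
      ring)

@[simp] lemma theta_X (p : kˣ × kˣ) :
    theta k p (qpX k (-1)) = (p.1 : k) • qpX k (-1) := scaleAut_X k p.1 p.2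

@[simp] lemma theta_Y (p : kˣ × kˣ) :
    theta k p (qpY k (-1)) = (p.2 : k) • qpY k (-1) := scaleAut_Y k p.1 p.2

/-- the ℤ/2-action on automorphisms by τ -/
def Thom : Multiplicative (ZMod 2) →* (QPlane k (-1) ≃ₐ[k] QPlane k (-1)) :=
  AddMonoidHom.toMultiplicativeLeft
    (ZMod.lift 2 ⟨zmultiplesHom (Additive (QPlane k (-1) ≃ₐ[k] QPlane k (-1)))
        (Additive.ofMul (tauAut k)),
      by
        show (2 : ℤ) • Additive.ofMul (tauAut k) = 0
        rw [two_zsmul]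
        show Additive.ofMul (tauAut k * tauAut k) = 0
        rw [tau_sq]
        rfl⟩)

lemma eq_one_of_toAdd_zero (g : Multiplicative (ZMod 2)) (h : g.toAdd = 0) : g = 1 := by
  have h1 : g.toAdd = (1 : Multiplicative (ZMod 2)).toAdd := h
  exact Multiplicative.toAdd.injective h1

lemma Thom_val (g : Multiplicative (ZMod 2)) :
    Thom k g = if (g.toAdd : ZMod 2) = 0 then 1 else tauAut k := by
  have hz : ∀ x : ZMod 2, x = 0 ∨ x = 1 := by decide
  rcases hz g.toAdd with h | h
  · rw [eq_one_of_toAdd_zero g h, map_one, if_pos]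
    rw [eq_one_of_toAdd_zero g h] at h
    exact h
  · rw [if_neg (by rw [h]; decide)]
    simp only [Thom, AddMonoidHom.toMultiplicativeLeft_apply_apply]
    rw [h, show (1 : ZMod 2) = ((1 : ℤ) : ZMod 2) from by norm_cast, ZMod.lift_coe]
    simp

lemma swapHom_val (g : Multiplicative (ZMod 2)) :
    swapHom k g = if (g.toAdd : ZMod 2) = 0 then 1 else swapAut k := by
  have hz : ∀ x : ZMod 2, x = 0 ∨ x = 1 := by decide
  rcases hz g.toAdd with h | h
  · rw [eq_one_of_toAdd_zero g h, map_one, if_pos]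
    rw [eq_one_of_toAdd_zero g h] at h
    exact h
  · rw [if_neg (by rw [h]; decide)]
    simp only [swapHom, AddMonoidHom.toMultiplicativeLeft_apply_apply]
    rw [h, show (1 : ZMod 2) = ((1 : ℤ) : ZMod 2) from by norm_cast, ZMod.lift_coe]
    simp


/-! ### the semidirect product isomorphism -/

variable {k}

lemma smul_X_eq_X {c : k} (h : c • qpX k (-1) = qpX k (-1)) : c = 1 := by
  have h2 := congrArg (fun z => E k z (toLex (1,0))) h
  simpa [map_smul, E_X, Finsupp.single_eq_same] using h2

lemma smul_Y_eq_Y {c : k} (h : c • qpY k (-1) = qpY k (-1)) : c = 1 := by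
  have h2 := congrArg (fun z => E k z (toLex (0,1))) h
  simpa [map_smul, E_Y, Finsupp.single_eq_same] using h2

lemma smul_Y_ne_X (c : k) : c • qpY k (-1) ≠ qpX k (-1) := by
  intro h
  have h2 : E k (c • qpY k (-1)) (toLex (1,0)) = E k (qpX k (-1)) (toLex (1,0)) := by rw [h]
  rw [map_smul, E_Y, E_X, Finsupp.smul_apply, Finsupp.single_eq_same,
    Finsupp.single_eq_of_ne (show toLex ((1:ℕ),(0:ℕ)) ≠ toLex (0,1) from by decide)] at h2
  simp at h2

variable (k)

lemma swapAut_apply (n : kˣ × kˣ) : swapAut k n = (n.2, n.1) := rfl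

lemma compat : ∀ g : Multiplicative (ZMod 2),
    (theta k).comp ((swapHom k g).toMonoidHom)
      = (MulAut.conj (Thom k g)).toMonoidHom.comp (theta k) := by
  intro g
  have hz : ∀ x : ZMod 2, x = 0 ∨ x = 1 := by decide
  rcases hz g.toAdd with h | h
  · rw [swapHom_val, Thom_val, if_pos h, if_pos h]
    refine MonoidHom.ext fun n => ?_
    simp
  · rw [swapHom_val, Thom_val, if_neg (by rw [h]; decide), if_neg (by rw [h]; decide)]
    refine MonoidHom.ext fun n => ?_
    simp only [MonoidHom.comp_apply, MulEquiv.coe_toMonoidHom, MulAut.conj_apply, tau_inv]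
    rw [swapAut_apply]
    refine equiv_ext ?_ ?_
    · rw [theta_X, AlgEquiv.mul_apply, AlgEquiv.mul_apply, tauAut_X, theta_Y, map_smul,
        tauAut_Y]
    · rw [theta_Y, AlgEquiv.mul_apply, AlgEquiv.mul_apply, tauAut_Y, theta_X, map_smul,
        tauAut_X]

/-- the full homomorphism from the semidirect product to the automorphism group -/
def Phi : (kˣ × kˣ) ⋊[swapHom k] Multiplicative (ZMod 2)
    →* (QPlane k (-1) ≃ₐ[k] QPlane k (-1)) :=
  SemidirectProduct.lift (theta k) (Thom k) (compat k)

lemma Phi_apply (e : (kˣ × kˣ) ⋊[swapHom k] Multiplicative (ZMod 2)) :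
    Phi k e = theta k e.left * Thom k e.right := rfl

lemma Phi_injective : Function.Injective (Phi k) := by
  rw [injective_iff_map_eq_one]
  rintro ⟨n, g⟩ he
  rw [Phi_apply] at he
  have hz : ∀ x : ZMod 2, x = 0 ∨ x = 1 := by decide
  rcases hz g.toAdd with h | h
  · rw [Thom_val, if_pos h, mul_one] at he
    have hX := congrArg (fun ψ : QPlane k (-1) ≃ₐ[k] QPlane k (-1) => ψ (qpX k (-1))) he
    have hY := congrArg (fun ψ : QPlane k (-1) ≃ₐ[k] QPlane k (-1) => ψ (qpY k (-1))) he
    simp only [theta_X, theta_Y, AlgEquiv.one_apply] at hX hY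
    have hn1 : n.1 = 1 := Units.ext (smul_X_eq_X hX)
    have hn2 : n.2 = 1 := Units.ext (smul_Y_eq_Y hY)
    have hn : n = 1 := Prod.ext hn1 hn2
    have hg : g = 1 := eq_one_of_toAdd_zero g h
    rw [hn, hg]
    rfl
  · exfalso
    rw [Thom_val, if_neg (by rw [h]; decide)] at he
    have hX := congrArg (fun ψ : QPlane k (-1) ≃ₐ[k] QPlane k (-1) => ψ (qpX k (-1))) he
    simp only [AlgEquiv.mul_apply, tauAut_X, theta_Y, AlgEquiv.one_apply] at hX
    exact smul_Y_ne_X _ hX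

variable [CharZero k]

lemma Phi_surjective : Function.Surjective (Phi k) := by
  intro φ
  rcases classify φ with ⟨c, d, hc, hd, hX, hY⟩ | ⟨c, d, hc, hd, hX, hY⟩
  · refine ⟨⟨(Units.mk0 c hc, Units.mk0 d hd), 1⟩, ?_⟩
    rw [Phi_apply]
    show theta k (Units.mk0 c hc, Units.mk0 d hd) * Thom k 1 = φ
    rw [map_one, mul_one]
    refine equiv_ext ?_ ?_
    · rw [theta_X]; exact hX.symm
    · rw [theta_Y]; exact hY.symm
  · refine ⟨⟨(Units.mk0 d hd, Units.mk0 c hc), Multiplicative.ofAdd (1 : ZMod 2)⟩, ?_⟩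
    rw [Phi_apply]
    show theta k (Units.mk0 d hd, Units.mk0 c hc)
        * Thom k (Multiplicative.ofAdd (1 : ZMod 2)) = φ
    rw [Thom_val, if_neg (by decide)]
    refine equiv_ext ?_ ?_
    · rw [AlgEquiv.mul_apply, tauAut_X, theta_Y]
      exact hX.symm
    · rw [AlgEquiv.mul_apply, tauAut_Y, theta_X]
      exact hY.symm

/-- the main isomorphism -/
def mainEquiv : (QPlane k (-1) ≃ₐ[k] QPlane k (-1)) ≃*
    (kˣ × kˣ) ⋊[swapHom k] Multiplicative (ZMod 2) :=
  (MulEquiv.ofBijective (Phi k) ⟨Phi_injective k, Phi_surjective k⟩).symm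

end QP4


/-- for `q = -1`, the exchange `τ` of `x` and `y` extends to a `k`-algebra
automorphism of the quantum plane, and `Aut_k(Λ) ≅ (kˣ)² ⋊ ⟨τ⟩` with `⟨τ⟩ ≅ ℤ/2`
acting by swapping the two factors. -/
theorem stmt_4 {k : Type*} [Field k] [CharZero k] :
    (∃ τ : QPlane k (-1) ≃ₐ[k] QPlane k (-1),
      τ (qpX k (-1)) = qpY k (-1) ∧ τ (qpY k (-1)) = qpX k (-1)) ∧
    Nonempty ((QPlane k (-1) ≃ₐ[k] QPlane k (-1)) ≃*
      (kˣ × kˣ) ⋊[swapHom k] Multiplicative (ZMod 2)) := by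
  exact ⟨⟨QP4.tauAut k, QP4.tauAut_X k, QP4.tauAut_Y k⟩, ⟨QP4.mainEquiv k⟩⟩
end
end

section
/- Let Λ = D_{Q,α}[x_1^{±1},…,x_r^{±1},x_{r+1},…,x_n] be a quantum polynomial ring over a division ring D with r ≥ 1. Then an element of the form λ'·x_i^{-1} + (middle terms with exponent vectors strictly between −e_i and e_i) + λ''·x_i, with λ', λ'' ∈ D*, is not a unit of Λ. -/
/-- Ordered monomial `x_1^{t_1} ⋯ x_n^{t_n}` with integer exponents, where negative
exponents use the designated inverses. -/
def qmono {A : Type*} [Monoid A] {n : ℕ} (X Xinv : Fin n → A) (t : Fin n → ℤ) : A :=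
  ((List.finRange n).map fun i =>
    if 0 ≤ t i then X i ^ (t i).toNat else Xinv i ^ (-t i).toNat).prod

/-- `A` is a ring of skew quantum polynomials `R_{Q,σ}[x_1^{±1},…,x_r^{±1},x_{r+1},…,x_n]`:
it contains `R` (via `emb`), is generated by elements `X i` (invertible for `i < r`, with
inverses `Xinv i`) subject to `x_j x_i = q_{ji} x_i x_j` and `x_i·a = σ_i(a)·x_i`, where
`q_{ii} = 1 = q_{ij}q_{ji}`, and it is a free left `R`-module with basis the monomials
`x^t`, `t ∈ ℤ^r × ℕ^{n-r}`. -/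
structure SkewQPR (R : Type*) [Ring R] (n r : ℕ) (q : Fin n → Fin n → Rˣ)
    (σ : Fin n → R ≃+* R) (A : Type*) [Ring A] : Type _ where
  emb : R →+* A
  inj : Function.Injective emb
  X : Fin n → A
  Xinv : Fin n → A
  qdiag : ∀ i, q i i = 1
  qanti : ∀ i j, q i j * q j i = 1
  mul_inv : ∀ i : Fin n, (i : ℕ) < r → X i * Xinv i = 1
  inv_mul : ∀ i : Fin n, (i : ℕ) < r → Xinv i * X i = 1
  comm : ∀ i j : Fin n, X j * X i = emb (q j i) * (X i * X j)
  act : ∀ (i : Fin n) (a : R), X i * emb a = emb (σ i a) * X i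
  free : ∀ v : A,
    ∃! c : { t : Fin n → ℤ // ∀ i : Fin n, r ≤ (i : ℕ) → 0 ≤ t i } →₀ R,
      v = c.sum fun t a => emb a * qmono X Xinv t.1

/-- Strict lexicographic order on integer exponent vectors. -/
def lexLt {n : ℕ} (a b : Fin n → ℤ) : Prop :=
  ∃ i : Fin n, (∀ j : Fin n, j < i → a j = b j) ∧ a i < b i

namespace SQAux

noncomputable instance (priority := 2000) lexlin {n : ℕ} : LinearOrder (Lex (Fin n → ℤ)) :=
  Pi.Lex.linearOrder

theorem lexLt_iff {n : ℕ} {a b : Fin n → ℤ} : lexLt a b ↔ toLex a < toLex b := Iff.rfl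

theorem lexLt_add_right {n : ℕ} {a b : Fin n → ℤ} (c : Fin n → ℤ) (h : lexLt a b) :
    lexLt (a + c) (b + c) := by
  obtain ⟨i, h1, h2⟩ := h
  exact ⟨i, fun j hj => by simp [h1 j hj], by simpa using h2⟩

theorem lexLt_add_left {n : ℕ} {a b : Fin n → ℤ} (c : Fin n → ℤ) (h : lexLt a b) :
    lexLt (c + a) (c + b) := by
  obtain ⟨i, h1, h2⟩ := h
  exact ⟨i, fun j hj => by simp [h1 j hj], by simpa using h2⟩

theorem lexLt_trans {n : ℕ} {a b c : Fin n → ℤ} (h1 : lexLt a b) (h2 : lexLt b c) :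
    lexLt a c := lexLt_iff.2 (lt_trans (lexLt_iff.1 h1) (lexLt_iff.1 h2))

theorem lexLt_irrefl {n : ℕ} {a : Fin n → ℤ} (h : lexLt a a) : False :=
  lt_irrefl _ (lexLt_iff.1 h)

variable {D A : Type*} [DivisionRing D] [Ring A] {n r : ℕ} {q : Fin n → Fin n → Dˣ}
  {σ : Fin n → D ≃+* D}

/-- key fact for associativity juggling -/
theorem mal {x y x' y' : A} (z : A) (h : x * y = x' * y') : x * (y * z) = x' * (y' * z) := by
  rw [← mul_assoc, h, mul_assoc]

variable (S : SkewQPR D n r q σ A)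

theorem emb_mul_inv {d : D} (hd : d ≠ 0) : S.emb d * S.emb d⁻¹ = 1 := by
  rw [← map_mul, mul_inv_cancel₀ hd, map_one]

theorem emb_inv_mul {d : D} (hd : d ≠ 0) : S.emb d⁻¹ * S.emb d = 1 := by
  rw [← map_mul, inv_mul_cancel₀ hd, map_one]

/-- generalized letter: `X j` or `Xinv j` -/
def Y (a : Fin n × Bool) : A := if a.2 then S.X a.1 else S.Xinv a.1

def twA (σ : Fin n → D ≃+* D) (a : Fin n × Bool) : D ≃+* D :=
  if a.2 then σ a.1 else (σ a.1).symm

theorem aut_ne (e : D ≃+* D) {c : D} : e c = 0 ↔ c = 0 :=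
  map_eq_zero_iff e e.injective

theorem Xinv_act {j : Fin n} (hj : (j : ℕ) < r) (c : D) :
    S.Xinv j * S.emb c = S.emb ((σ j).symm c) * S.Xinv j := by
  have h1 : S.emb c * S.X j = S.X j * S.emb ((σ j).symm c) := by
    rw [S.act j ((σ j).symm c), RingEquiv.apply_symm_apply]
  calc S.Xinv j * S.emb c
      = S.Xinv j * (S.emb c * (S.X j * S.Xinv j)) := by rw [S.mul_inv j hj, mul_one]
    _ = S.Xinv j * ((S.emb c * S.X j) * S.Xinv j) := by rw [mul_assoc]
    _ = S.Xinv j * ((S.X j * S.emb ((σ j).symm c)) * S.Xinv j) := by rw [h1]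
    _ = ((S.Xinv j * S.X j) * S.emb ((σ j).symm c)) * S.Xinv j := by
        simp only [mul_assoc]
    _ = S.emb ((σ j).symm c) * S.Xinv j := by rw [S.inv_mul j hj, one_mul]

theorem Y_act {a : Fin n × Bool} (ha : a.2 = false → (a.1 : ℕ) < r) (c : D) :
    Y S a * S.emb c = S.emb (twA σ a c) * Y S a := by
  rcases a with ⟨j, b⟩
  cases b
  · simpa [Y, twA] using Xinv_act S (ha rfl) c
  · simpa [Y, twA] using S.act j c

theorem swap_inv {j : Fin n} (hj : (j : ℕ) < r) {w : A} {d : D} (hd : d ≠ 0)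
    (h : S.X j * w = S.emb d * (w * S.X j)) :
    S.Xinv j * w = S.emb ((σ j).symm d⁻¹) * (w * S.Xinv j) := by
  have h2 : w * S.X j = S.emb d⁻¹ * (S.X j * w) := by
    rw [h, ← mul_assoc, emb_inv_mul S hd, one_mul]
  calc S.Xinv j * w
      = S.Xinv j * (w * (S.X j * S.Xinv j)) := by rw [S.mul_inv j hj, mul_one]
    _ = S.Xinv j * ((w * S.X j) * S.Xinv j) := by rw [mul_assoc]
    _ = S.Xinv j * ((S.emb d⁻¹ * (S.X j * w)) * S.Xinv j) := by rw [h2]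
    _ = (S.Xinv j * S.emb d⁻¹) * ((S.X j * w) * S.Xinv j) := by simp only [mul_assoc]
    _ = (S.emb ((σ j).symm d⁻¹) * S.Xinv j) * ((S.X j * w) * S.Xinv j) := by
        rw [Xinv_act S hj]
    _ = S.emb ((σ j).symm d⁻¹) * (((S.Xinv j * S.X j) * w) * S.Xinv j) := by
        simp only [mul_assoc]
    _ = S.emb ((σ j).symm d⁻¹) * (w * S.Xinv j) := by rw [S.inv_mul j hj, one_mul]

theorem Y_swap {a b : Fin n × Bool} (ha : a.2 = false → (a.1 : ℕ) < r)
    (hb : b.2 = false → (b.1 : ℕ) < r) :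
    ∃ d : D, d ≠ 0 ∧ Y S a * Y S b = S.emb d * (Y S b * Y S a) := by
  rcases a with ⟨k, bk⟩
  rcases b with ⟨j, bj⟩
  have hTT : ∀ k' j' : Fin n, S.X k' * S.X j' = S.emb (q k' j') * (S.X j' * S.X k') :=
    fun k' j' => S.comm j' k'
  have hTF : ∀ (k' j' : Fin n), (j' : ℕ) < r → ∃ d : D, d ≠ 0 ∧
      S.X k' * S.Xinv j' = S.emb d * (S.Xinv j' * S.X k') := by
    intro k' j' hj'
    have h0 := swap_inv S hj' (Units.ne_zero (q j' k')) (hTT j' k')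
    refine ⟨((σ j').symm (((q j' k' : D))⁻¹))⁻¹, ?_, ?_⟩
    · exact inv_ne_zero ((aut_ne _).not.2 (inv_ne_zero (Units.ne_zero _)))
    · rw [h0, ← mul_assoc, ← map_mul, inv_mul_cancel₀, map_one, one_mul]
      exact (aut_ne _).not.2 (inv_ne_zero (Units.ne_zero _))
  cases bk <;> cases bj
  · -- Xinv k * Xinv j
    obtain ⟨d, hd, h0⟩ := hTF k j (hb rfl)
    exact ⟨(σ k).symm d⁻¹, (aut_ne _).not.2 (inv_ne_zero hd),
      by simpa [Y] using swap_inv S (ha rfl) hd h0⟩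
  · -- Xinv k * X j
    exact ⟨(σ k).symm ((q k j : D))⁻¹, (aut_ne _).not.2 (inv_ne_zero (Units.ne_zero _)),
      by simpa [Y] using swap_inv S (ha rfl) (Units.ne_zero (q k j)) (hTT k j)⟩
  · -- X k * Xinv j
    obtain ⟨d, hd, h0⟩ := hTF k j (hb rfl)
    exact ⟨d, hd, by simpa [Y] using h0⟩
  · -- X k * X j
    exact ⟨q k j, Units.ne_zero _, by simpa [Y] using hTT k j⟩

theorem Y_pow_act {a : Fin n × Bool} (ha : a.2 = false → (a.1 : ℕ) < r) (m : ℕ) :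
    ∀ c : D, ∃ c' : D, (c' = 0 ↔ c = 0) ∧
      Y S a ^ m * S.emb c = S.emb c' * Y S a ^ m := by
  induction m with
  | zero => exact fun c => ⟨c, Iff.rfl, by simp⟩
  | succ m ih =>
    intro c
    obtain ⟨c', hc', h⟩ := ih (twA σ a c)
    refine ⟨c', hc'.trans (aut_ne _), ?_⟩
    rw [pow_succ, mul_assoc, Y_act S ha, ← mul_assoc, h, mul_assoc]

theorem Y_swap_pow {a b : Fin n × Bool} (ha : a.2 = false → (a.1 : ℕ) < r)
    (hb : b.2 = false → (b.1 : ℕ) < r) (m : ℕ) :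
    ∃ d : D, d ≠ 0 ∧ Y S a * Y S b ^ m = S.emb d * (Y S b ^ m * Y S a) := by
  induction m with
  | zero => exact ⟨1, one_ne_zero, by simp⟩
  | succ m ih =>
    obtain ⟨d, hd, h⟩ := ih
    obtain ⟨d2, hd2, h2⟩ := Y_swap S ha hb
    obtain ⟨c', hc', h3⟩ := Y_pow_act S hb m d2
    refine ⟨d * c', mul_ne_zero hd (fun h0 => hd2 (hc'.1 h0)), ?_⟩
    calc Y S a * Y S b ^ (m + 1)
        = Y S a * (Y S b ^ m * Y S b) := by rw [pow_succ]
      _ = S.emb d * ((Y S b ^ m * Y S a) * Y S b) := by rw [mal _ h]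
      _ = S.emb d * (Y S b ^ m * (Y S a * Y S b)) := by rw [mul_assoc]
      _ = S.emb d * (Y S b ^ m * (S.emb d2 * (Y S b * Y S a))) := by rw [h2]
      _ = S.emb d * (S.emb c' * (Y S b ^ m * (Y S b * Y S a))) := by rw [mal _ h3]
      _ = S.emb (d * c') * (Y S b ^ (m + 1) * Y S a) := by
          rw [map_mul, pow_succ]
          simp only [mul_assoc]


/-- the `i`-th factor of a monomial -/
def FF (t : Fin n → ℤ) (i : Fin n) : A :=
  if 0 ≤ t i then S.X i ^ (t i).toNat else S.Xinv i ^ (-t i).toNat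

theorem qmono_eq (t : Fin n → ℤ) :
    qmono S.X S.Xinv t = ((List.finRange n).map (FF S t)).prod := rfl

theorem FF_eq_pow (t : Fin n → ℤ) (i : Fin n) :
    FF S t i = Y S (i, decide (0 ≤ t i)) ^ (t i).natAbs := by
  by_cases h : 0 ≤ t i
  · simp only [FF, Y, h, if_true, decide_eq_true h]
    congr 1
    omega
  · simp only [FF, Y, h, if_false, decide_eq_false h]
    congr 1
    omega

theorem FF_letter_valid {t : Fin n → ℤ} {i : Fin n} (hi : t i < 0 → (i : ℕ) < r) :
    ((i, decide (0 ≤ t i)) : Fin n × Bool).2 = false → ((i, decide (0 ≤ t i)).1 : ℕ) < r := by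
  intro h
  simp only [decide_eq_false_iff_not] at h
  exact hi (by omega)

theorem FF_act {t : Fin n → ℤ} {i : Fin n} (hi : t i < 0 → (i : ℕ) < r) (c : D) :
    ∃ c' : D, (c' = 0 ↔ c = 0) ∧ FF S t i * S.emb c = S.emb c' * FF S t i := by
  rw [FF_eq_pow]
  exact Y_pow_act S (FF_letter_valid hi) _ c

theorem Y_comm_list {a : Fin n × Bool} (ha : a.2 = false → (a.1 : ℕ) < r) (t : Fin n → ℤ) :
    ∀ l : List (Fin n), (∀ i ∈ l, t i < 0 → (i : ℕ) < r) →
    ∃ d : D, d ≠ 0 ∧ Y S a * (l.map (FF S t)).prod = S.emb d * ((l.map (FF S t)).prod * Y S a) := by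
  intro l
  induction l with
  | nil => exact fun _ => ⟨1, one_ne_zero, by simp⟩
  | cons i l ih =>
    intro hl
    obtain ⟨d2, hd2, h2⟩ := ih fun j hj => hl j (List.mem_cons_of_mem _ hj)
    have h1 : ∃ d1 : D, d1 ≠ 0 ∧ Y S a * FF S t i = S.emb d1 * (FF S t i * Y S a) := by
      rw [FF_eq_pow]
      exact Y_swap_pow S ha (FF_letter_valid (hl i List.mem_cons_self)) _
    obtain ⟨d1, hd1, h1⟩ := h1
    obtain ⟨c', hc', h3⟩ := FF_act S (hl i List.mem_cons_self) d2
    refine ⟨d1 * c', mul_ne_zero hd1 fun h0 => hd2 (hc'.1 h0), ?_⟩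
    calc Y S a * ((i :: l).map (FF S t)).prod
        = Y S a * (FF S t i * (l.map (FF S t)).prod) := by rw [List.map_cons, List.prod_cons]
      _ = S.emb d1 * ((FF S t i * Y S a) * (l.map (FF S t)).prod) := by rw [mal _ h1]
      _ = S.emb d1 * (FF S t i * (Y S a * (l.map (FF S t)).prod)) := by rw [mul_assoc]
      _ = S.emb d1 * (FF S t i * (S.emb d2 * ((l.map (FF S t)).prod * Y S a))) := by rw [h2]
      _ = S.emb d1 * (S.emb c' * (FF S t i * ((l.map (FF S t)).prod * Y S a))) := by
          rw [mal _ h3]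
      _ = S.emb (d1 * c') * (((i :: l).map (FF S t)).prod * Y S a) := by
          rw [map_mul, List.map_cons, List.prod_cons]
          simp only [mul_assoc]

def eps (a : Fin n × Bool) : ℤ := cond a.2 1 (-1)

theorem merge {j : Fin n} {b : Bool} (hb : b = false → (j : ℕ) < r)
    (t : Fin n → ℤ) (ht : t j < 0 → (j : ℕ) < r) :
    Y S (j, b) * FF S t j = FF S (t + Pi.single j (eps (j, b))) j := by
  cases b
  · have hjr : (j : ℕ) < r := hb rfl
    have htj : (t + Pi.single j (-1 : ℤ) : Fin n → ℤ) j = t j + -1 := by simp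
    show S.Xinv j * FF S t j = FF S (t + Pi.single j (-1)) j
    simp only [FF, htj]
    by_cases h : 0 ≤ t j
    · by_cases h0 : t j = 0
      · rw [if_pos h, if_neg (by omega : ¬ (0:ℤ) ≤ t j + -1),
          show (t j).toNat = 0 by omega, show (-(t j + -1)).toNat = 1 by omega,
          pow_zero, mul_one, pow_one]
      · obtain ⟨k, hk⟩ : ∃ k, (t j).toNat = k + 1 := ⟨(t j).toNat - 1, by omega⟩
        rw [if_pos h, if_pos (by omega : (0:ℤ) ≤ t j + -1), hk, pow_succ', ← mul_assoc,
          S.inv_mul j hjr, one_mul, show (t j + -1).toNat = k by omega]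
    · rw [if_neg h, if_neg (by omega : ¬ (0:ℤ) ≤ t j + -1),
        show (-(t j + -1)).toNat = (-t j).toNat + 1 by omega, pow_succ']
  · have htj : (t + Pi.single j (1 : ℤ) : Fin n → ℤ) j = t j + 1 := by simp
    show S.X j * FF S t j = FF S (t + Pi.single j 1) j
    simp only [FF, htj]
    by_cases h : 0 ≤ t j
    · rw [if_pos h, if_pos (by omega : (0:ℤ) ≤ t j + 1),
        show (t j + 1).toNat = (t j).toNat + 1 by omega, pow_succ']
    · have hjr : (j : ℕ) < r := ht (by omega)
      obtain ⟨k, hk⟩ : ∃ k, (-t j).toNat = k + 1 := ⟨(-t j).toNat - 1, by omega⟩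
      by_cases h2 : 0 ≤ t j + 1
      · rw [if_neg h, if_pos h2, hk, show k = 0 by omega, zero_add, pow_one,
          S.mul_inv j hjr, show (t j + 1).toNat = 0 by omega, pow_zero]
      · rw [if_neg h, if_neg h2, hk, pow_succ', ← mul_assoc, S.mul_inv j hjr, one_mul,
          show (-(t j + 1)).toNat = k by omega]


/-- admissibility of an exponent vector -/
def adm (r : ℕ) {n : ℕ} (t : Fin n → ℤ) : Prop := ∀ i : Fin n, r ≤ (i : ℕ) → 0 ≤ t i

theorem adm_valid {t : Fin n → ℤ} (ht : adm r t) (i : Fin n) : t i < 0 → (i : ℕ) < r := by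
  intro h
  by_contra hh
  exact absurd (ht i (le_of_not_gt hh)) (by omega)

theorem absorb {a : Fin n × Bool} (ha : a.2 = false → (a.1 : ℕ) < r) {t : Fin n → ℤ}
    (ht : adm r t) :
    ∃ d : D, d ≠ 0 ∧ Y S a * qmono S.X S.Xinv t
      = S.emb d * qmono S.X S.Xinv (t + Pi.single a.1 (eps a)) := by
  obtain ⟨j, b⟩ := a
  set t' : Fin n → ℤ := t + Pi.single j (eps (j, b)) with ht'
  have hlen : (j : ℕ) < (List.finRange n).length := by simp [j.isLt]
  have hsplit : List.finRange n
      = (List.finRange n).take (j : ℕ) ++ j :: (List.finRange n).drop ((j : ℕ) + 1) := by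
    conv_lhs => rw [← List.take_append_drop (j : ℕ) (List.finRange n)]
    rw [List.drop_eq_getElem_cons hlen]
    simp
  have hnd := List.nodup_finRange n
  rw [hsplit] at hnd
  rw [List.nodup_append] at hnd
  have hj1 : j ∉ (List.finRange n).take (j : ℕ) := fun hmem =>
    hnd.2.2 _ hmem _ List.mem_cons_self rfl
  have hj2 : j ∉ (List.finRange n).drop ((j : ℕ) + 1) := (List.nodup_cons.1 hnd.2.1).1
  obtain ⟨d1, hd1, h1⟩ := Y_comm_list S ha t ((List.finRange n).take (j : ℕ))
    (fun i _ => adm_valid ht i)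
  have hFF1 : ((List.finRange n).take (j : ℕ)).map (FF S t)
      = ((List.finRange n).take (j : ℕ)).map (FF S t') := by
    refine List.map_congr_left fun i hi => ?_
    have hij : i ≠ j := fun h => hj1 (h ▸ hi)
    simp only [FF, ht', Pi.add_apply, Pi.single_eq_of_ne hij, add_zero]
  have hFF2 : ((List.finRange n).drop ((j : ℕ) + 1)).map (FF S t)
      = ((List.finRange n).drop ((j : ℕ) + 1)).map (FF S t') := by
    refine List.map_congr_left fun i hi => ?_
    have hij : i ≠ j := fun h => hj2 (h ▸ hi)
    simp only [FF, ht', Pi.add_apply, Pi.single_eq_of_ne hij, add_zero]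
  refine ⟨d1, hd1, ?_⟩
  calc Y S (j, b) * qmono S.X S.Xinv t
      = Y S (j, b) * ((((List.finRange n).take (j : ℕ)).map (FF S t)).prod *
          (FF S t j * (((List.finRange n).drop ((j : ℕ) + 1)).map (FF S t)).prod)) := by
        rw [qmono_eq]
        conv_lhs => rw [hsplit]
        rw [List.map_append, List.prod_append, List.map_cons, List.prod_cons]
    _ = S.emb d1 * (((((List.finRange n).take (j : ℕ)).map (FF S t)).prod * Y S (j, b)) *
          (FF S t j * (((List.finRange n).drop ((j : ℕ) + 1)).map (FF S t)).prod)) := by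
        rw [mal _ h1]
    _ = S.emb d1 * ((((List.finRange n).take (j : ℕ)).map (FF S t)).prod *
          ((Y S (j, b) * FF S t j) *
            (((List.finRange n).drop ((j : ℕ) + 1)).map (FF S t)).prod)) := by
        simp only [mul_assoc]
    _ = S.emb d1 * ((((List.finRange n).take (j : ℕ)).map (FF S t')).prod *
          (FF S t' j * (((List.finRange n).drop ((j : ℕ) + 1)).map (FF S t')).prod)) := by
        rw [merge S (fun h => ha h) t (adm_valid ht j), hFF1, hFF2]
    _ = S.emb d1 * qmono S.X S.Xinv t' := by
        rw [qmono_eq]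
        conv_rhs => rw [hsplit]
        rw [List.map_append, List.prod_append, List.map_cons, List.prod_cons]

/-- word product -/
def wp (l : List (Fin n × Bool)) : A := (l.map (Y S)).prod

theorem wp_nil : wp S ([] : List (Fin n × Bool)) = 1 := rfl

theorem wp_append (l1 l2 : List (Fin n × Bool)) : wp S (l1 ++ l2) = wp S l1 * wp S l2 := by
  simp [wp]

theorem wp_act : ∀ l : List (Fin n × Bool), (∀ a ∈ l, a.2 = false → (a.1 : ℕ) < r) →
    ∀ c : D, ∃ c' : D, (c' = 0 ↔ c = 0) ∧ wp S l * S.emb c = S.emb c' * wp S l := by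
  intro l
  induction l with
  | nil => exact fun _ c => ⟨c, Iff.rfl, by simp [wp]⟩
  | cons a l ih =>
    intro hl c
    obtain ⟨c1, hc1, h1⟩ := ih (fun x hx => hl x (List.mem_cons_of_mem _ hx)) c
    refine ⟨twA σ a c1, (aut_ne _).trans hc1, ?_⟩
    have : wp S (a :: l) = Y S a * wp S l := by simp [wp]
    rw [this, mul_assoc, h1, ← mul_assoc, Y_act S (hl a List.mem_cons_self), mul_assoc]

/-- exponent vector of a word -/
def ev (l : List (Fin n × Bool)) : Fin n → ℤ :=
  fun j => (l.map fun a => if a.1 = j then eps a else 0).sum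

theorem ev_nil : ev ([] : List (Fin n × Bool)) = (0 : Fin n → ℤ) := rfl

theorem ev_append_singleton (l : List (Fin n × Bool)) (a : Fin n × Bool) :
    ev (l ++ [a]) = ev l + Pi.single a.1 (eps a) := by
  funext j
  simp only [ev, List.map_append, List.sum_append, List.map_cons, List.map_nil,
    List.sum_cons, List.sum_nil, add_zero, Pi.add_apply]
  congr 1
  rcases eq_or_ne (a.1) j with h | h
  · subst h; simp
  · simp [h, Pi.single_eq_of_ne (Ne.symm h)]

theorem wp_mul_mono : ∀ l : List (Fin n × Bool), (∀ a ∈ l, a.2 = false → (a.1 : ℕ) < r) →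
    ∀ t : Fin n → ℤ, adm r t → ∃ d : D, d ≠ 0 ∧
      wp S l * qmono S.X S.Xinv t = S.emb d * qmono S.X S.Xinv (t + ev l) := by
  intro l
  induction l using List.reverseRecOn with
  | nil =>
    intro _ t _
    refine ⟨1, one_ne_zero, ?_⟩
    have : t + ev ([] : List (Fin n × Bool)) = t := by funext j; simp [ev]
    rw [this, wp_nil, map_one, one_mul]
  | append_singleton l a ih =>
    intro hv t ht
    have hva : a.2 = false → (a.1 : ℕ) < r := hv a (by simp)
    obtain ⟨d1, hd1, h1⟩ := absorb S hva ht
    have ht1 : adm r (t + Pi.single a.1 (eps a)) := by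
      intro i hi
      rcases eq_or_ne (a.1) i with h | h
      · subst h
        have : a.2 = true := by
          cases hh : a.2
          · exact absurd (hva hh) (by omega)
          · rfl
        simp only [Pi.add_apply, Pi.single_eq_same, eps, this, cond_true]
        have := ht _ hi
        omega
      · simpa [Pi.single_eq_of_ne (Ne.symm h)] using ht _ hi
    obtain ⟨d2, hd2, h2⟩ := ih (fun x hx => hv x (by simp [hx])) _ ht1
    obtain ⟨d1', hd1', h1'⟩ := wp_act S l (fun x hx => hv x (by simp [hx])) d1
    refine ⟨d1' * d2, mul_ne_zero (fun h0 => hd1 (hd1'.1 h0)) hd2, ?_⟩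
    have hev : t + Pi.single a.1 (eps a) + ev l = t + ev (l ++ [a]) := by
      rw [ev_append_singleton]
      abel
    calc wp S (l ++ [a]) * qmono S.X S.Xinv t
        = wp S l * (Y S a * qmono S.X S.Xinv t) := by
          rw [wp_append]
          simp only [wp, List.map_cons, List.map_nil, List.prod_cons, List.prod_nil, mul_one,
            mul_assoc]
      _ = wp S l * (S.emb d1 * qmono S.X S.Xinv (t + Pi.single a.1 (eps a))) := by rw [h1]
      _ = (wp S l * S.emb d1) * qmono S.X S.Xinv (t + Pi.single a.1 (eps a)) := by
          rw [mul_assoc]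
      _ = (S.emb d1' * wp S l) * qmono S.X S.Xinv (t + Pi.single a.1 (eps a)) := by rw [h1']
      _ = S.emb d1' * (S.emb d2 * qmono S.X S.Xinv (t + Pi.single a.1 (eps a) + ev l)) := by
          rw [mul_assoc, h2]
      _ = S.emb (d1' * d2) * qmono S.X S.Xinv (t + ev (l ++ [a])) := by
          rw [hev, map_mul, mul_assoc]


/-- canonical word representing a monomial -/
def canon (t : Fin n → ℤ) : List (Fin n × Bool) :=
  (List.finRange n).flatMap fun i => List.replicate (t i).natAbs (i, decide (0 ≤ t i))

theorem canon_valid {t : Fin n → ℤ} (ht : adm r t) :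
    ∀ a ∈ canon t, a.2 = false → (a.1 : ℕ) < r := by
  intro a ha
  simp only [canon, List.mem_flatMap, List.mem_replicate] at ha
  obtain ⟨i, _, _, rfl⟩ := ha
  exact FF_letter_valid (adm_valid ht i)

theorem wp_flatMap (g : Fin n → List (Fin n × Bool)) :
    ∀ L : List (Fin n), wp S (L.flatMap g) = (L.map fun i => wp S (g i)).prod := by
  intro L
  induction L with
  | nil => rfl
  | cons i L ih => rw [List.flatMap_cons, wp_append, ih, List.map_cons, List.prod_cons]

theorem wp_replicate (m : ℕ) (a : Fin n × Bool) : wp S (List.replicate m a) = Y S a ^ m := by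
  simp [wp, List.map_replicate, List.prod_replicate]

theorem wp_canon (t : Fin n → ℤ) : wp S (canon t) = qmono S.X S.Xinv t := by
  rw [canon, wp_flatMap, qmono_eq]
  refine congrArg List.prod (List.map_congr_left fun i _ => ?_)
  rw [wp_replicate, FF_eq_pow]

theorem sum_map_flatMap (g : Fin n → List (Fin n × Bool)) (f : Fin n × Bool → ℤ) :
    ∀ L : List (Fin n), ((L.flatMap g).map f).sum = (L.map fun i => ((g i).map f).sum).sum := by
  intro L
  induction L with
  | nil => rfl
  | cons i L ih =>
    rw [List.flatMap_cons, List.map_append, List.sum_append, ih, List.map_cons, List.sum_cons]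

theorem ev_canon (t : Fin n → ℤ) : ev (canon t) = t := by
  funext j
  rw [ev, canon, sum_map_flatMap]
  have hterm : ∀ i : Fin n,
      ((List.replicate (t i).natAbs ((i, decide (0 ≤ t i)) : Fin n × Bool)).map
        fun a => if a.1 = j then eps a else 0).sum
      = if i = j then t j else 0 := by
    intro i
    rw [List.map_replicate, List.sum_replicate]
    rcases eq_or_ne i j with h | h
    · subst h
      by_cases h0 : 0 ≤ t i
      · simp [h0, eps]
      · simp [h0, eps]
        rw [abs_of_nonpos (by omega : t i ≤ 0), neg_neg]
    · simp [h]
  rw [List.map_congr_left fun i _ => hterm i, ← Fin.sum_univ_def]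
  simp

theorem qmono_zero : qmono S.X S.Xinv (0 : Fin n → ℤ) = 1 := by
  rw [qmono_eq]
  refine List.prod_eq_one fun x hx => ?_
  simp only [List.mem_map] at hx
  obtain ⟨i, _, rfl⟩ := hx
  simp [FF]

theorem mono_mul {s t : Fin n → ℤ} (hs : adm r s) (ht : adm r t) :
    ∃ d : D, d ≠ 0 ∧ qmono S.X S.Xinv s * qmono S.X S.Xinv t
      = S.emb d * qmono S.X S.Xinv (s + t) := by
  obtain ⟨d, hd, h⟩ := wp_mul_mono S (canon s) (canon_valid hs) t ht
  refine ⟨d, hd, ?_⟩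
  rw [← wp_canon S s, h, ev_canon, add_comm t s]

theorem mono_act {s : Fin n → ℤ} (hs : adm r s) (c : D) :
    ∃ c' : D, (c' = 0 ↔ c = 0) ∧
      qmono S.X S.Xinv s * S.emb c = S.emb c' * qmono S.X S.Xinv s := by
  obtain ⟨c', hc', h⟩ := wp_act S (canon s) (canon_valid hs) c
  exact ⟨c', hc', by rw [← wp_canon S s]; exact h⟩

theorem term_mul {s t : Fin n → ℤ} (hs : adm r s) (ht : adm r t) (a b : D) :
    ∃ cD : D, (a ≠ 0 → b ≠ 0 → cD ≠ 0) ∧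
      (S.emb a * qmono S.X S.Xinv s) * (S.emb b * qmono S.X S.Xinv t)
        = S.emb cD * qmono S.X S.Xinv (s + t) := by
  obtain ⟨b', hb', h1⟩ := mono_act S hs b
  obtain ⟨d, hd, h2⟩ := mono_mul S hs ht
  refine ⟨a * b' * d, fun ha hb => mul_ne_zero (mul_ne_zero ha (fun h0 => hb (hb'.1 h0))) hd, ?_⟩
  calc (S.emb a * qmono S.X S.Xinv s) * (S.emb b * qmono S.X S.Xinv t)
      = S.emb a * ((qmono S.X S.Xinv s * S.emb b) * qmono S.X S.Xinv t) := by
        simp only [mul_assoc]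
    _ = S.emb a * ((S.emb b' * qmono S.X S.Xinv s) * qmono S.X S.Xinv t) := by rw [h1]
    _ = S.emb a * (S.emb b' * (qmono S.X S.Xinv s * qmono S.X S.Xinv t)) := by
        rw [mul_assoc]
    _ = S.emb a * (S.emb b' * (S.emb d * qmono S.X S.Xinv (s + t))) := by rw [h2]
    _ = S.emb (a * b' * d) * qmono S.X S.Xinv (s + t) := by
        simp only [map_mul, mul_assoc]


/-- admissible exponent vectors -/
abbrev BT (n r : ℕ) := { t : Fin n → ℤ // ∀ i : Fin n, r ≤ (i : ℕ) → 0 ≤ t i }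

/-- the evaluation of a formal coefficient vector -/
noncomputable def TTh : (BT n r →₀ D) →+ A :=
  Finsupp.liftAddHom fun t =>
    (AddMonoidHom.mulRight (qmono S.X S.Xinv t.1)).comp S.emb.toAddMonoidHom

theorem TTh_apply (F : BT n r →₀ D) :
    TTh S F = F.sum fun t a => S.emb a * qmono S.X S.Xinv t.1 := by
  rw [TTh, Finsupp.liftAddHom_apply]
  rfl

theorem TTh_single (t : BT n r) (a : D) :
    TTh S (Finsupp.single t a) = S.emb a * qmono S.X S.Xinv t.1 := by
  rw [TTh, Finsupp.liftAddHom_apply_single]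
  rfl

theorem rep_unique {v : A} {F G : BT n r →₀ D} (hF : v = TTh S F) (hG : v = TTh S G) :
    F = G := by
  obtain ⟨c, -, hc⟩ := S.free v
  have h1 : F = c := hc F (by rw [hF, TTh_apply])
  have h2 : G = c := hc G (by rw [hG, TTh_apply])
  rw [h1, h2]

def sAdd (s t : BT n r) : BT n r :=
  ⟨s.1 + t.1, fun i hi => add_nonneg (s.2 i hi) (t.2 i hi)⟩

theorem key {u v : A} {F G H : BT n r →₀ D} (hF : u = TTh S F) (hG : v = TTh S G)
    (hH : u * v = TTh S H) {M N : BT n r} (hM : M ∈ F.support) (hN : N ∈ G.support)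
    (huniq : ∀ s ∈ F.support, ∀ t ∈ G.support, s.1 + t.1 = M.1 + N.1 → s = M ∧ t = N) :
    H (sAdd M N) ≠ 0 := by
  classical
  have spec : ∀ s t : BT n r, ∃ cD : D, (F s ≠ 0 → G t ≠ 0 → cD ≠ 0) ∧
      (S.emb (F s) * qmono S.X S.Xinv s.1) * (S.emb (G t) * qmono S.X S.Xinv t.1)
        = S.emb cD * qmono S.X S.Xinv (s.1 + t.1) :=
    fun s t => term_mul S s.2 t.2 (F s) (G t)
  choose cf hcf1 hcf2 using spec
  set H' : BT n r →₀ D :=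
    ∑ s ∈ F.support, ∑ t ∈ G.support, Finsupp.single (sAdd s t) (cf s t) with hH'
  have hrep : u * v = TTh S H' := by
    rw [hH', map_sum]
    have e1 : ∀ s ∈ F.support,
        TTh S (∑ t ∈ G.support, Finsupp.single (sAdd s t) (cf s t))
          = ∑ t ∈ G.support,
              (S.emb (F s) * qmono S.X S.Xinv s.1) * (S.emb (G t) * qmono S.X S.Xinv t.1) := by
      intro s _
      rw [map_sum]
      refine Finset.sum_congr rfl fun t _ => ?_
      rw [TTh_single, hcf2 s t]
      rfl
    rw [Finset.sum_congr rfl e1, hF, hG, TTh_apply, TTh_apply, Finsupp.sum, Finsupp.sum,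
      Finset.sum_mul_sum]
  have hHH' : H = H' := rep_unique S hH hrep
  have heval : H' (sAdd M N) = cf M N := by
    rw [hH', Finsupp.finset_sum_apply]
    have e2 : ∀ s ∈ F.support,
        (∑ t ∈ G.support, Finsupp.single (sAdd s t) (cf s t)) (sAdd M N)
          = ∑ t ∈ G.support, if sAdd s t = sAdd M N then cf s t else 0 := by
      intro s _
      rw [Finsupp.finset_sum_apply]
      exact Finset.sum_congr rfl fun t _ => Finsupp.single_apply
    rw [Finset.sum_congr rfl e2]
    rw [Finset.sum_eq_single_of_mem M hM (fun s hs hsne => Finset.sum_eq_zero fun t htG => ?_)]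
    · rw [Finset.sum_eq_single_of_mem N hN (fun t ht htne => ?_), if_pos rfl]
      refine if_neg fun hc => ?_
      have := (huniq M hM t ht (Subtype.ext_iff.1 hc)).2
      exact htne this
    · refine if_neg fun hc => ?_
      have := (huniq s hs t htG (Subtype.ext_iff.1 hc)).1
      exact hsne this
  rw [hHH', heval]
  exact hcf1 M N (Finsupp.mem_support_iff.1 hM) (Finsupp.mem_support_iff.1 hN)


theorem max_pair {m : ℕ} {sv tv Mv Nv : Fin m → ℤ} (hs : toLex sv ≤ toLex Mv)
    (ht : toLex tv ≤ toLex Nv) (hsum : sv + tv = Mv + Nv) : sv = Mv ∧ tv = Nv := by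
  have hse : sv = Mv := by
    by_contra hne
    have h1 : lexLt sv Mv := lexLt_iff.2 (lt_of_le_of_ne hs (fun h => hne h))
    have h2 := lexLt_add_right tv h1
    have h3 : toLex (Mv + tv) ≤ toLex (Mv + Nv) := by
      rcases lt_or_eq_of_le ht with h | h
      · exact le_of_lt (lexLt_iff.1 (lexLt_add_left Mv (lexLt_iff.2 h)))
      · rw [show tv = Nv from h]
    have h4 := lt_of_lt_of_le (lexLt_iff.1 h2) h3
    rw [hsum] at h4
    exact lt_irrefl _ h4
  refine ⟨hse, ?_⟩
  rw [hse] at hsum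
  exact add_left_cancel hsum

end SQAux

/-- in a quantum polynomial ring `Λ` over a division ring `D` with `r ≥ 1`,
an element `λ'·x_i⁻¹ + (middle terms with exponent vectors strictly between `−e_i` and
`e_i`) + λ''·x_i`, with `λ', λ'' ∈ D*`, is not a unit. -/
theorem stmt_16 {D A : Type*} [DivisionRing D] [Ring A] {n r : ℕ} (hrn : r ≤ n)
    (hr : 1 ≤ r) (q : Fin n → Fin n → Dˣ) (σ : Fin n → D ≃+* D)
    (S : SkewQPR D n r q σ A) (i : Fin n) (hi : (i : ℕ) < r)
    (lam' lam'' : D) (hlam' : lam' ≠ 0) (hlam'' : lam'' ≠ 0)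
    (c : (Fin n → ℤ) →₀ D)
    (hc : ∀ t ∈ c.support,
      (∀ j : Fin n, r ≤ (j : ℕ) → 0 ≤ t j) ∧
      lexLt (-(Pi.single i 1 : Fin n → ℤ)) t ∧ lexLt t (Pi.single i 1 : Fin n → ℤ)) :
    ¬ IsUnit (S.emb lam' * qmono S.X S.Xinv (-(Pi.single i 1 : Fin n → ℤ)) +
        c.sum (fun t a => S.emb a * qmono S.X S.Xinv t) +
        S.emb lam'' * qmono S.X S.Xinv (Pi.single i 1 : Fin n → ℤ)) := by
  classical
  intro hU
  set e : Fin n → ℤ := Pi.single i 1 with he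
  have hine : ∀ j : Fin n, r ≤ (j : ℕ) → j ≠ i := by
    intro j hj h
    subst h
    omega
  have adme : ∀ j : Fin n, r ≤ (j : ℕ) → 0 ≤ e j := by
    intro j hj
    rw [he, Pi.single_eq_of_ne (hine j hj)]
  have admne : ∀ j : Fin n, r ≤ (j : ℕ) → 0 ≤ (-e) j := by
    intro j hj
    rw [Pi.neg_apply, he, Pi.single_eq_of_ne (hine j hj), neg_zero]
  set eB : SQAux.BT n r := ⟨e, adme⟩ with heB
  set neB : SQAux.BT n r := ⟨-e, admne⟩ with hneB
  set zB : SQAux.BT n r := ⟨0, fun _ _ => le_refl 0⟩ with hzB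
  set p : (Fin n → ℤ) → Prop := fun t => ∀ j : Fin n, r ≤ (j : ℕ) → 0 ≤ t j with hp
  have hcsup : ∀ x ∈ c.support, p x := fun x hx => (hc x hx).1
  set F : SQAux.BT n r →₀ D :=
    Finsupp.single neB lam' + Finsupp.subtypeDomain p c + Finsupp.single eB lam'' with hFdef
  -- the element is represented by F
  have hu : (S.emb lam' * qmono S.X S.Xinv (-e) +
      c.sum (fun t a => S.emb a * qmono S.X S.Xinv t) +
      S.emb lam'' * qmono S.X S.Xinv e) = SQAux.TTh S F := by
    rw [hFdef, map_add, map_add, SQAux.TTh_single, SQAux.TTh_single, SQAux.TTh_apply]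
    have hsub := Finsupp.sum_subtypeDomain_index (v := c)
      (h := fun t a => S.emb a * qmono S.X S.Xinv t) hcsup
    rw [hsub]
  -- the lex comparison of the extremes
  have hlt : lexLt (-e) e := by
    refine ⟨i, fun j hj => ?_, ?_⟩
    · rw [Pi.neg_apply, he, Pi.single_eq_of_ne (ne_of_lt hj), neg_zero]
    · rw [Pi.neg_apply, he, Pi.single_eq_same]
      norm_num
  have hnee : neB ≠ eB := by
    intro h
    have h2 := congrFun (Subtype.ext_iff.1 h) i
    rw [hneB, heB] at h2
    simp only [Pi.neg_apply, he, Pi.single_eq_same] at h2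
    omega
  have hce : c e = 0 := by
    by_contra h0
    exact SQAux.lexLt_irrefl (hc e (Finsupp.mem_support_iff.2 h0)).2.2
  have hcne : c (-e) = 0 := by
    by_contra h0
    exact SQAux.lexLt_irrefl (hc (-e) (Finsupp.mem_support_iff.2 h0)).2.1
  have hFe : F eB = lam'' := by
    rw [hFdef, Finsupp.add_apply, Finsupp.add_apply, Finsupp.single_eq_of_ne' hnee,
      Finsupp.single_eq_same, Finsupp.subtypeDomain_apply]
    show 0 + c e + lam'' = lam''
    rw [hce, zero_add, zero_add]
  have hFne : F neB = lam' := by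
    rw [hFdef, Finsupp.add_apply, Finsupp.add_apply, Finsupp.single_eq_of_ne' (Ne.symm hnee),
      Finsupp.single_eq_same, Finsupp.subtypeDomain_apply]
    show lam' + c (-e) + 0 = lam'
    rw [hcne, add_zero, add_zero]
  have hFsup : ∀ x ∈ F.support, toLex x.1 ≤ toLex e ∧ toLex (-e) ≤ toLex x.1 := by
    intro x hx
    have hxne := Finsupp.mem_support_iff.1 hx
    rw [hFdef, Finsupp.add_apply, Finsupp.add_apply] at hxne
    by_cases h1 : x = neB
    · subst h1
      exact ⟨le_of_lt (SQAux.lexLt_iff.1 hlt), le_refl _⟩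
    by_cases h2 : x = eB
    · subst h2
      exact ⟨le_refl _, le_of_lt (SQAux.lexLt_iff.1 hlt)⟩
    have hmid : c x.1 ≠ 0 := by
      intro h0
      apply hxne
      rw [Finsupp.single_eq_of_ne' (fun h => h1 h.symm), Finsupp.single_eq_of_ne'
        (fun h => h2 h.symm), Finsupp.subtypeDomain_apply, h0, add_zero, add_zero]
    have hmem := hc x.1 (Finsupp.mem_support_iff.2 hmid)
    exact ⟨le_of_lt (SQAux.lexLt_iff.1 hmem.2.2), le_of_lt (SQAux.lexLt_iff.1 hmem.2.1)⟩
  have hFeB : eB ∈ F.support := Finsupp.mem_support_iff.2 (by rw [hFe]; exact hlam'')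
  have hFneB : neB ∈ F.support := Finsupp.mem_support_iff.2 (by rw [hFne]; exact hlam')
  -- inverse
  obtain ⟨v, hv⟩ := hU.exists_right_inv
  obtain ⟨G, hG1, -⟩ := S.free v
  have hG : v = SQAux.TTh S G := hG1.trans (SQAux.TTh_apply S G).symm
  have h01 : (0 : A) ≠ 1 := by
    intro h01
    have : (0 : D) = 1 := S.inj (by rw [map_zero, map_one, h01])
    exact zero_ne_one this
  have hGne : G.support.Nonempty := by
    rw [Finsupp.support_nonempty_iff]
    intro h0
    rw [h0] at hG
    rw [map_zero] at hG
    rw [hG, mul_zero] at hv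
    exact h01 hv
  obtain ⟨N, hN, hNmax⟩ :=
    G.support.exists_max_image (fun x => (toLex x.1 : Lex (Fin n → ℤ))) hGne
  obtain ⟨N', hN', hNmin⟩ :=
    G.support.exists_min_image (fun x => (toLex x.1 : Lex (Fin n → ℤ))) hGne
  have hH1 : (S.emb lam' * qmono S.X S.Xinv (-e) +
      c.sum (fun t a => S.emb a * qmono S.X S.Xinv t) +
      S.emb lam'' * qmono S.X S.Xinv e) * v = SQAux.TTh S (Finsupp.single zB (1 : D)) := by
    rw [hv, SQAux.TTh_single, map_one, one_mul]
    show (1 : A) = qmono S.X S.Xinv (0 : Fin n → ℤ)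
    rw [SQAux.qmono_zero]
  -- max : the pair (eB, N)
  have hmax := SQAux.key S hu hG hH1 hFeB hN (fun s hs t ht hsum =>
    let h := SQAux.max_pair (hs := (hFsup s hs).1) (ht := hNmax t ht) (hsum := hsum)
    ⟨Subtype.ext h.1, Subtype.ext h.2⟩)
  -- min : the pair (neB, N')
  have hmin := SQAux.key S hu hG hH1 hFneB hN' (fun s hs t ht hsum =>
    let h := SQAux.max_pair (hs := (hFsup s hs).2) (ht := hNmin t ht) (hsum := hsum.symm)
    ⟨Subtype.ext h.1.symm, Subtype.ext h.2.symm⟩)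
  -- extract the equalities
  have hzeq1 : zB = SQAux.sAdd eB N := by
    by_contra h0
    exact hmax (by rw [Finsupp.single_apply, if_neg h0])
  have hzeq2 : zB = SQAux.sAdd neB N' := by
    by_contra h0
    exact hmin (by rw [Finsupp.single_apply, if_neg h0])
  have h1 : e + N.1 = 0 := (Subtype.ext_iff.1 hzeq1).symm
  have h2 : -e + N'.1 = 0 := (Subtype.ext_iff.1 hzeq2).symm
  have hNe : N.1 = -e := eq_neg_of_add_eq_zero_right h1
  have hN'e : N'.1 = e := by
    have := eq_neg_of_add_eq_zero_right h2
    rw [this, neg_neg]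
  have hfin := hNmin N hN
  rw [hNe, hN'e] at hfin
  exact absurd (lt_of_le_of_lt hfin (SQAux.lexLt_iff.1 hlt)) (lt_irrefl _)
end
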